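/- arXiv:1210.5155 — 9 statements merged into one kernel-verified Lean document; each statement's English description precedes it below -/
import Mathlib

section
/- Main Lemma. Let K be a field and fix a monomial order on K[x₁,…,x_r]. Let d ∈ ℕ, let λ : K[x]_d → K be a nonzero K-linear functional on the space of homogeneous polynomials of degree d, and let I ⊆ K[x₁,…,x_r] be a homogeneous ideal such that I ∩ K[x]_d = ker λ. Let P, Δ ∈ K[x]_d be homogeneous of degree d, let N_P be a normal form of P with respect to I and let N_Δ be a normal form of Δ with respect to I. If λ(Δ) ≠ 0, then N_Δ ≠ 0 and λ(Δ)·N_P = λ(P)·N_Δ as polynomials in K[x₁,…,x_r]. -/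
open MvPolynomial

/-- A monomial order on exponent vectors in `Fin r →₀ ℕ`: a total order compatible with
addition which is a well-order. -/
structure MonomialOrd (r : ℕ) where
  lt : (Fin r →₀ ℕ) → (Fin r →₀ ℕ) → Prop
  irrefl : ∀ a, ¬ lt a a
  trans : ∀ a b c, lt a b → lt b c → lt a c
  total : ∀ a b, a ≠ b → lt a b ∨ lt b a
  add_right : ∀ a b c, lt a b → lt (a + c) (b + c)
  wf : WellFounded lt

variable {K : Type} [Field K] {r : ℕ}

/-- `m` is the exponent of the leading monomial of `f`: it occurs in `f` and is greater
than every other monomial occurring in `f`. -/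
def IsLeadMonomial (o : MonomialOrd r) (f : MvPolynomial (Fin r) K) (m : Fin r →₀ ℕ) : Prop :=
  m ∈ f.support ∧ ∀ m' ∈ f.support, m' ≠ m → o.lt m' m

/-- `Lt(I)`: the ideal generated by the leading monomials of all nonzero elements of `I`. -/
noncomputable def ltIdeal (o : MonomialOrd r) (I : Ideal (MvPolynomial (Fin r) K)) :
    Ideal (MvPolynomial (Fin r) K) :=
  Ideal.span {g | ∃ f ∈ I, f ≠ 0 ∧ ∃ m, IsLeadMonomial o f m ∧ g = monomial m (1 : K)}

/-- `N` is a normal form of `f` with respect to `I`: `f - N ∈ I` and no monomial occurring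
in `N` belongs to `Lt(I)`. -/
def IsNormalForm (o : MonomialOrd r) (I : Ideal (MvPolynomial (Fin r) K))
    (f N : MvPolynomial (Fin r) K) : Prop :=
  f - N ∈ I ∧ ∀ m ∈ N.support, monomial m (1 : K) ∉ ltIdeal o I

/-- A homogeneous ideal: one containing all homogeneous components of its elements. -/
def IsHomogeneousIdeal (I : Ideal (MvPolynomial (Fin r) K)) : Prop :=
  ∀ f ∈ I, ∀ d : ℕ, MvPolynomial.homogeneousComponent d f ∈ I

lemma exists_lead (o : MonomialOrd r) (s : Finset (Fin r →₀ ℕ)) (hs : s.Nonempty) :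
    ∃ m ∈ s, ∀ m' ∈ s, m' ≠ m → o.lt m' m := by
  classical
  induction s using Finset.induction_on with
  | empty => exact absurd hs (by simp)
  | @insert a s ha ih =>
    by_cases hs' : s.Nonempty
    · obtain ⟨m, hm, hmax⟩ := ih hs'
      rcases eq_or_ne a m with rfl | hne
      · refine ⟨a, Finset.mem_insert_self _ _, ?_⟩
        intro m' hm' hne'
        rcases Finset.mem_insert.mp hm' with rfl | hms
        · exact absurd rfl hne'
        · exact hmax m' hms hne'
      · rcases o.total a m hne with hlt | hlt
        · refine ⟨m, Finset.mem_insert_of_mem hm, ?_⟩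
          intro m' hm' hne'
          rcases Finset.mem_insert.mp hm' with rfl | hms
          · exact hlt
          · exact hmax m' hms hne'
        · refine ⟨a, Finset.mem_insert_self _ _, ?_⟩
          intro m' hm' hne'
          rcases Finset.mem_insert.mp hm' with rfl | hms
          · exact absurd rfl hne'
          · rcases eq_or_ne m' m with rfl | h2
            · exact hlt
            · exact o.trans _ _ _ (hmax m' hms h2) hlt
    · rw [Finset.not_nonempty_iff_eq_empty] at hs'
      subst hs'
      refine ⟨a, by simp, ?_⟩
      intro m' hm' hne'
      simp at hm'
      exact absurd hm' hne'


/-- **Main Lemma.** If `λ : K[x]_d → K` is a nonzero linear functional whose kernel is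
`I ∩ K[x]_d` for a homogeneous ideal `I`, `P, Δ` are homogeneous of degree `d` with normal
forms `N_P, N_Δ` with respect to `I`, and `λ(Δ) ≠ 0`, then `N_Δ ≠ 0` and
`λ(Δ)·N_P = λ(P)·N_Δ`. -/
theorem main_lemma (o : MonomialOrd r) (d : ℕ)
    (lam : MvPolynomial.homogeneousSubmodule (Fin r) K d →ₗ[K] K) (hlam : lam ≠ 0)
    (I : Ideal (MvPolynomial (Fin r) K)) (hI : IsHomogeneousIdeal I)
    (hker : ∀ (Q : MvPolynomial (Fin r) K)
      (hQ : Q ∈ MvPolynomial.homogeneousSubmodule (Fin r) K d),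
      Q ∈ I ↔ lam ⟨Q, hQ⟩ = 0)
    (P Δ : MvPolynomial (Fin r) K)
    (hP : P ∈ MvPolynomial.homogeneousSubmodule (Fin r) K d)
    (hΔ : Δ ∈ MvPolynomial.homogeneousSubmodule (Fin r) K d)
    (NP NΔ : MvPolynomial (Fin r) K)
    (hNP : IsNormalForm o I P NP) (hNΔ : IsNormalForm o I Δ NΔ)
    (h : lam ⟨Δ, hΔ⟩ ≠ 0) :
    NΔ ≠ 0 ∧ lam ⟨Δ, hΔ⟩ • NP = lam ⟨P, hP⟩ • NΔ := by
  classical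
  have hsmul : ∀ (c : K) (p : MvPolynomial (Fin r) K), p ∈ I → c • p ∈ I := by
    intro c p hp
    rw [MvPolynomial.smul_eq_C_mul]
    exact I.mul_mem_left _ hp
  set a := lam ⟨Δ, hΔ⟩ with ha
  set b := lam ⟨P, hP⟩ with hb
  -- NΔ ≠ 0
  have hNΔ0 : NΔ ≠ 0 := by
    intro h0
    have hmem : Δ ∈ I := by
      have := hNΔ.1
      rwa [h0, sub_zero] at this
    exact h ((hker Δ hΔ).mp hmem)
  refine ⟨hNΔ0, ?_⟩
  -- Q ∈ I
  have hQmem : a • P - b • Δ ∈ MvPolynomial.homogeneousSubmodule (Fin r) K d :=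
    Submodule.sub_mem _ (Submodule.smul_mem _ _ hP) (Submodule.smul_mem _ _ hΔ)
  have hQI : a • P - b • Δ ∈ I := by
    rw [hker _ hQmem]
    have : (⟨a • P - b • Δ, hQmem⟩ : MvPolynomial.homogeneousSubmodule (Fin r) K d)
        = a • ⟨P, hP⟩ - b • ⟨Δ, hΔ⟩ := rfl
    rw [this, map_sub, map_smul, map_smul, ← ha, ← hb]
    simp [mul_comm]
  -- F ∈ I
  have hFI : a • NP - b • NΔ ∈ I := by
    have : a • NP - b • NΔ
        = (a • P - b • Δ) - a • (P - NP) + b • (Δ - NΔ) := by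
      simp only [smul_sub]
      abel
    rw [this]
    exact I.add_mem (I.sub_mem hQI (hsmul _ _ hNP.1)) (hsmul _ _ hNΔ.1)
  -- F = 0
  have hF0 : a • NP - b • NΔ = 0 := by
    by_contra hF
    obtain ⟨m, hm, hmax⟩ :=
      exists_lead o (a • NP - b • NΔ).support (MvPolynomial.support_nonempty.mpr hF)
    have hlt : monomial m (1 : K) ∈ ltIdeal o I :=
      Ideal.subset_span ⟨_, hFI, hF, m, ⟨hm, hmax⟩, rfl⟩
    have hsub : m ∈ NP.support ∪ NΔ.support := by
      have h1 := MvPolynomial.support_sub (Fin r) (a • NP) (b • NΔ) hm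
      rcases Finset.mem_union.mp h1 with h2 | h2
      · exact Finset.mem_union_left _ (Finsupp.support_smul h2)
      · exact Finset.mem_union_right _ (Finsupp.support_smul h2)
    rcases Finset.mem_union.mp hsub with h2 | h2
    · exact hNP.2 m h2 hlt
    · exact hNΔ.2 m h2 hlt
  exact sub_eq_zero.mp hF0
end

section
/- Let β₀, β₁, …, β_r be nonzero vectors in ℝʳ such that there exists ξ ∈ ℝʳ with ⟨βᵢ, ξ⟩ > 0 for all i = 0,…,r (the list is polarized). Let ε ∈ ℝʳ be regular with respect to the list [β₀,…,β_r] and suppose ε ∈ Cone(β₁,…,β_r). Then there exists a unique l ∈ {1,…,r} such that ε ∈ Cone(β₀, β₁, …, β̂_l, …, β_r), i.e. the cone generated by all of β₀,…,β_r except β_l. -/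
open MvPolynomial

noncomputable section

/-- The standard inner product on `ℝʳ`. -/
def dotp {r : ℕ} (v w : Fin r → ℝ) : ℝ := ∑ i, v i * w i

/-- The linear polynomial `v₁x₁ + … + v_r x_r` associated to a vector `v ∈ ℝʳ`. -/
def linPoly {r : ℕ} (v : Fin r → ℝ) : MvPolynomial (Fin r) ℝ := ∑ i, C (v i) * X i

/-- The fraction field of `ℝ[x₁,…,x_r]`. -/
abbrev Frac (r : ℕ) := FractionRing (MvPolynomial (Fin r) ℝ)

/-- The canonical embedding of `ℝ[x₁,…,x_r]` into its fraction field. -/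
def emb {r : ℕ} (p : MvPolynomial (Fin r) ℝ) : Frac r := algebraMap _ _ p

/-- A real constant viewed inside the fraction field `Frac r`. -/
def cst {r : ℕ} (a : ℝ) : Frac r := emb (C a)

/-- `v` lies in the cone generated by the vectors `α i`, `i ∈ s`. -/
def InCone {r n : ℕ} (α : Fin n → Fin r → ℝ) (s : Finset (Fin n)) (v : Fin r → ℝ) : Prop :=
  ∃ c : Fin n → ℝ, (∀ i ∈ s, 0 ≤ c i) ∧ v = ∑ i ∈ s, c i • α i

/-- The cone generated by the vectors `α i`, `i ∈ s`, as a set. -/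
def coneSet {r n : ℕ} (α : Fin n → Fin r → ℝ) (s : Finset (Fin n)) : Set (Fin r → ℝ) :=
  {v | InCone α s v}

/-- The list `α` is polarized: some `ξ` pairs strictly positively with every `α i`. -/
def Polarized {r n : ℕ} (α : Fin n → Fin r → ℝ) : Prop :=
  ∃ ξ : Fin r → ℝ, ∀ i, 0 < dotp (α i) ξ

/-- `ε` is regular with respect to the list `α`: it lies in no proper subspace spanned by a
subset of the list. -/
def RegularWrt {r n : ℕ} (α : Fin n → Fin r → ℝ) (ε : Fin r → ℝ) : Prop :=
  ∀ s : Set (Fin n), Submodule.span ℝ (α '' s) ≠ ⊤ → ε ∉ Submodule.span ℝ (α '' s)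

/-- A set of indices is generating if the corresponding vectors span `ℝʳ`. -/
def Generating {r n : ℕ} (α : Fin n → Fin r → ℝ) (J : Set (Fin n)) : Prop :=
  Submodule.span ℝ (α '' J) = ⊤

/-- The fraction `P / ∏ᵢ αᵢ^{mᵢ}` in the fraction field. -/
def fracOf {r n : ℕ} (α : Fin n → Fin r → ℝ) (P : MvPolynomial (Fin r) ℝ) (m : Fin n → ℕ) :
    Frac r :=
  emb P / ∏ i, emb (linPoly (α i)) ^ m i

/-- `R_𝔄`: the span of all fractions `P / ∏ᵢ αᵢ^{mᵢ}`. -/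
def Rspace {r n : ℕ} (α : Fin n → Fin r → ℝ) : Submodule ℝ (Frac r) :=
  Submodule.span ℝ {x | ∃ P m, x = fracOf α P m}

/-- `G_𝔄`: the span of the fractions `1 / ∏ᵢ αᵢ^{mᵢ}` with generating support. -/
def Gspace {r n : ℕ} (α : Fin n → Fin r → ℝ) : Submodule ℝ (Frac r) :=
  Submodule.span ℝ {x | ∃ m : Fin n → ℕ, Generating α {i | 0 < m i} ∧ x = fracOf α 1 m}

/-- `NG_𝔄`: the span of the fractions `P / ∏ᵢ αᵢ^{mᵢ}` with non-generating support. -/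
def NGspace {r n : ℕ} (α : Fin n → Fin r → ℝ) : Submodule ℝ (Frac r) :=
  Submodule.span ℝ {x | ∃ P m, ¬ Generating α {i | 0 < m i} ∧ x = fracOf α P m}

/-- `Φ_σ = 1 / ∏_{j ∈ σ} αⱼ`. -/
def Phi {r n : ℕ} (α : Fin n → Fin r → ℝ) (σ : Finset (Fin n)) : Frac r :=
  (∏ j ∈ σ, emb (linPoly (α j)))⁻¹

/-- `(αⱼ)_{j ∈ σ}` is a basis of `ℝʳ`. -/
def IsConeBasis {r n : ℕ} (α : Fin n → Fin r → ℝ) (σ : Finset (Fin n)) : Prop :=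
  LinearIndependent ℝ (fun j : {x // x ∈ σ} => α j.1) ∧
    Submodule.span ℝ (α '' ↑σ) = ⊤

/-- The Gram determinant `det[⟨αⱼ, α_k⟩]_{j,k ∈ σ}`. -/
def gram {r n : ℕ} (α : Fin n → Fin r → ℝ) (σ : Finset (Fin n)) : ℝ :=
  Matrix.det (Matrix.of fun j k : {x // x ∈ σ} => dotp (α j.1) (α k.1))

/-- A Jeffrey–Kirwan functional for `(𝔄, ε)`. -/
def IsJKFunctional {r n : ℕ} (α : Fin n → Fin r → ℝ) (ε : Fin r → ℝ)
    (lam : Frac r →ₗ[ℝ] ℝ) : Prop :=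
  (∀ x ∈ NGspace α, lam x = 0) ∧
  (∀ m : Fin n → ℕ, Generating α {i | 0 < m i} → (∑ i, m i) ≠ r →
    lam (fracOf α 1 m) = 0) ∧
  (∀ σ : Finset (Fin n), IsConeBasis α σ →
    (InCone α σ ε → lam (Phi α σ) = 1 / Real.sqrt (gram α σ)) ∧
    (¬ InCone α σ ε → lam (Phi α σ) = 0))

/-- The ideal `I_{𝔄,ε}` generated by the products `∏_{j∈J} αⱼ` over all `J` such that
`ε ∉ Cone(αᵢ : i ∉ J)`. -/
def JKIdeal {r n : ℕ} (α : Fin n → Fin r → ℝ) (ε : Fin r → ℝ) :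
    Ideal (MvPolynomial (Fin r) ℝ) :=
  Ideal.span {g | ∃ J : Finset (Fin n), ¬ InCone α Jᶜ ε ∧ g = ∏ j ∈ J, linPoly (α j)}

/-- `H` is a hyperplane of `ℝʳ` spanned by a subset of the list `α`. -/
def IsHyperplaneOf {r n : ℕ} (α : Fin n → Fin r → ℝ) (H : Submodule ℝ (Fin r → ℝ)) : Prop :=
  (∃ s : Set (Fin n), H = Submodule.span ℝ (α '' s)) ∧ Module.finrank ℝ H = r - 1

/-- `Cone(𝔄)` minus the union of the hyperplanes spanned by subsets of `𝔄`. -/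
def chamberComplement {r n : ℕ} (α : Fin n → Fin r → ℝ) : Set (Fin r → ℝ) :=
  coneSet α Finset.univ \ ⋃ H ∈ {H | IsHyperplaneOf α H}, (H : Set (Fin r → ℝ))

/-- A chamber of `𝔄`: a connected component of `Cone(𝔄) ∖ ⋃_{H ∈ ℋ(𝔄)} H`. -/
def IsChamber {r n : ℕ} (α : Fin n → Fin r → ℝ) (c : Set (Fin r → ℝ)) : Prop :=
  ∃ x ∈ chamberComplement α, c = connectedComponentIn (chamberComplement α) x

lemma span_ne_top_aux {r : ℕ} (β : Fin (r + 1) → Fin r → ℝ)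
    (s : Set (Fin (r + 1))) (i j : Fin (r + 1)) (hij : i ≠ j) (hi : i ∉ s) (hj : j ∉ s) :
    Submodule.span ℝ (β '' s) ≠ ⊤ := by
  intro htop
  have hsub : β '' s ⊆ ((({i, j}ᶜ : Finset (Fin (r + 1))).image β : Finset (Fin r → ℝ)) : Set (Fin r → ℝ)) := by
    rintro _ ⟨x, hx, rfl⟩
    refine Finset.mem_coe.mpr (Finset.mem_image.mpr ⟨x, ?_, rfl⟩)
    simp only [Finset.mem_compl, Finset.mem_insert, Finset.mem_singleton]
    rintro (rfl | rfl)
    · exact hi hx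
    · exact hj hx
  have h1 : Submodule.span ℝ ((({i, j}ᶜ : Finset (Fin (r + 1))).image β : Finset (Fin r → ℝ)) : Set (Fin r → ℝ)) = ⊤ :=
    top_unique (htop ▸ Submodule.span_mono hsub)
  have h2 := finrank_span_finset_le_card (R := ℝ) (({i, j}ᶜ : Finset (Fin (r + 1))).image β)
  rw [Set.finrank, h1, finrank_top] at h2
  have h3 : Module.finrank ℝ (Fin r → ℝ) = r := Module.finrank_fin_fun ℝ
  have h4 : (({i, j}ᶜ : Finset (Fin (r + 1))).image β).card ≤ r - 1 := by
    refine le_trans Finset.card_image_le ?_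
    rw [Finset.card_compl]
    have : ({i, j} : Finset (Fin (r + 1))).card = 2 := by
      rw [Finset.card_insert_of_notMem (by simpa using hij), Finset.card_singleton]
    rw [this, Fintype.card_fin]; omega
  have hr : 0 < r := Nat.pos_of_ne_zero fun h => by subst h; omega
  omega

/-- Let `β₀, …, β_r` be a polarized list of nonzero vectors in `ℝʳ`, and let `ε` be regular
with respect to the list with `ε ∈ Cone(β₁,…,β_r)`. Then there is a unique `l ∈ {1,…,r}`
with `ε ∈ Cone(β₀,…,β̂_l,…,β_r)`. -/
theorem exists_unique_erase_cone {r : ℕ} (β : Fin (r + 1) → Fin r → ℝ)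
    (hβ : ∀ i, β i ≠ 0) (hpol : Polarized β) (ε : Fin r → ℝ)
    (hreg : RegularWrt β ε) (hε : InCone β (Finset.univ.erase 0) ε) :
    ∃! l : Fin (r + 1), l ≠ 0 ∧ InCone β (Finset.univ.erase l) ε := by
  have hr : 0 < r := by
    rcases Nat.eq_zero_or_pos r with h | h
    · subst h; exact absurd (Subsingleton.elim (β 0) 0) (hβ 0)
    · exact h
  obtain ⟨ξ, hξ⟩ := hpol
  obtain ⟨d₀, hd₀nn, hd₀⟩ := hε
  -- the image finset identity
  have himg : Finset.univ.erase (0 : Fin (r + 1)) = Finset.image Fin.succ Finset.univ := by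
    ext i
    simp only [Finset.mem_erase, Finset.mem_univ, and_true, Finset.mem_image, true_and]
    exact (Fin.exists_succ_eq).symm
  have hinj : ∀ x ∈ (Finset.univ : Finset (Fin r)), ∀ y ∈ (Finset.univ : Finset (Fin r)),
      Fin.succ x = Fin.succ y → x = y := fun x _ y _ h => Fin.succ_injective _ h
  -- span of β₁..β_r is ⊤
  have hspan : Submodule.span ℝ (Set.range (β ∘ Fin.succ)) = ⊤ := by
    by_contra h
    have hrange : Set.range (β ∘ Fin.succ) = β '' {i | i ≠ 0} := by
      ext v
      constructor
      · rintro ⟨j, rfl⟩; exact ⟨j.succ, Fin.succ_ne_zero j, rfl⟩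
      · rintro ⟨i, hi, rfl⟩
        obtain ⟨j, rfl⟩ := Fin.exists_succ_eq.mpr hi
        exact ⟨j, rfl⟩
    have hε' : ε ∈ Submodule.span ℝ (β '' {i | i ≠ 0}) := by
      rw [hd₀]
      exact Submodule.sum_mem _ fun i hi => Submodule.smul_mem _ _
        (Submodule.subset_span ⟨i, Finset.ne_of_mem_erase hi, rfl⟩)
    rw [hrange] at h
    exact hreg _ h hε'
  let B : Module.Basis (Fin r) ℝ (Fin r → ℝ) :=
    basisOfTopLeSpanOfCardEqFinrank (β ∘ Fin.succ) hspan.ge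
      (by rw [Fintype.card_fin, Module.finrank_fin_fun])
  have hB : ∀ j, B j = β j.succ := fun j => by
    rw [show B = basisOfTopLeSpanOfCardEqFinrank (β ∘ Fin.succ) hspan.ge
      (by rw [Fintype.card_fin, Module.finrank_fin_fun]) from rfl]
    rw [coe_basisOfTopLeSpanOfCardEqFinrank]
    rfl
  set c : Fin r → ℝ := fun j => B.repr ε j with hc
  set a : Fin r → ℝ := fun j => B.repr (β 0) j with ha
  have hεsum : ε = ∑ j, c j • β j.succ := by
    conv_lhs => rw [← B.sum_repr ε]
    exact Finset.sum_congr rfl fun j _ => by rw [hB]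
  have hβ0sum : β 0 = ∑ j, a j • β j.succ := by
    conv_lhs => rw [← B.sum_repr (β 0)]
    exact Finset.sum_congr rfl fun j _ => by rw [hB]
  have hrepr : ∀ e : Fin r → ℝ, ε = ∑ j, e j • β j.succ → e = c := by
    intro e he
    have h1 : (∑ j, e j • B j) = ε := by
      rw [he]; exact Finset.sum_congr rfl fun j _ => by rw [hB]
    have := B.repr_sum_self e
    rw [h1] at this
    funext j
    rw [hc, ← this]
  -- sum splitting lemma
  have hsplit : ∀ (l : Fin r) (d : Fin (r + 1) → ℝ),
      (∑ i ∈ Finset.univ.erase l.succ, d i • β i)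
        = d 0 • β 0 + ∑ j ∈ Finset.univ.erase l, d j.succ • β j.succ := by
    intro l d
    have h0mem : (0 : Fin (r + 1)) ∈ Finset.univ.erase l.succ :=
      Finset.mem_erase.mpr ⟨(Fin.succ_ne_zero l).symm, Finset.mem_univ _⟩
    rw [← Finset.add_sum_erase _ _ h0mem]
    congr 1
    have himg2 : (Finset.univ.erase l.succ).erase 0 = Finset.image Fin.succ (Finset.univ.erase l) := by
      ext i
      simp only [Finset.mem_erase, Finset.mem_univ, and_true, Finset.mem_image]
      constructor
      · rintro ⟨hi0, hil⟩
        obtain ⟨j, rfl⟩ := Fin.exists_succ_eq.mpr hi0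
        exact ⟨j, fun h => hil (by rw [h]), rfl⟩
      · rintro ⟨j, hj, rfl⟩
        exact ⟨Fin.succ_ne_zero j, fun h => hj (Fin.succ_injective _ h)⟩
    rw [himg2, Finset.sum_image (fun x _ y _ h => Fin.succ_injective _ h)]
  -- coefficients of ε are positive
  have hcnn : ∀ j, 0 ≤ c j := by
    have he : (fun j => d₀ j.succ) = c := by
      apply hrepr
      rw [hd₀, himg, Finset.sum_image hinj]
    intro j
    rw [← congrFun he j]
    exact hd₀nn j.succ (Finset.mem_erase.mpr ⟨Fin.succ_ne_zero j, Finset.mem_univ _⟩)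
  have hcpos : ∀ j, 0 < c j := by
    intro j
    rcases (hcnn j).lt_or_eq with h | h
    · exact h
    · exfalso
      have hmem : ε ∈ Submodule.span ℝ (β '' (Fin.succ '' {k | k ≠ j})) := by
        have : ε = ∑ k ∈ Finset.univ.erase j, c k • β k.succ := by
          rw [hεsum, ← Finset.add_sum_erase _ _ (Finset.mem_univ j), ← h, zero_smul, zero_add]
        rw [this]
        exact Submodule.sum_mem _ fun k hk => Submodule.smul_mem _ _
          (Submodule.subset_span ⟨k.succ, ⟨k, Finset.ne_of_mem_erase hk, rfl⟩, rfl⟩)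
      refine hreg _ (span_ne_top_aux β _ 0 j.succ (Fin.succ_ne_zero j).symm ?_ ?_) hmem
      · rintro ⟨k, _, hk⟩; exact Fin.succ_ne_zero k hk
      · rintro ⟨k, hk, hk2⟩; exact hk (Fin.succ_injective _ hk2)
  -- no ties (regularity)
  have hne : ∀ l k : Fin r, k ≠ l → 0 < a l → c k * a l - c l * a k ≠ 0 := by
    intro l k hkl hal heq
    set t := c l / a l with ht
    have hel : c l - t * a l = 0 := by rw [ht]; field_simp; ring
    have hek : c k - t * a k = 0 := by
      rw [ht]; field_simp; linarith
    have hid : ε = t • β 0 + ∑ j, (c j - t * a j) • β j.succ := by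
      rw [hβ0sum, Finset.smul_sum, ← Finset.sum_add_distrib, hεsum]
      refine Finset.sum_congr rfl fun j _ => ?_
      rw [smul_smul, ← add_smul]
      congr 1
      ring
    have hid2 : ε = t • β 0 + ∑ j ∈ (Finset.univ.erase l).erase k, (c j - t * a j) • β j.succ := by
      rw [hid]
      congr 1
      refine (Finset.sum_subset (Finset.subset_univ _) ?_).symm
      intro x _ hx
      simp only [Finset.mem_erase, Finset.mem_univ, and_true, not_and_or, not_not] at hx
      rcases hx with rfl | rfl
      · rw [hek, zero_smul]
      · rw [hel, zero_smul]
    have hmem : ε ∈ Submodule.span ℝ (β '' ({0} ∪ Fin.succ '' {j | j ≠ k ∧ j ≠ l})) := by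
      rw [hid2]
      refine Submodule.add_mem _ (Submodule.smul_mem _ _ (Submodule.subset_span ⟨0, Or.inl rfl, rfl⟩)) ?_
      refine Submodule.sum_mem _ fun j hj => Submodule.smul_mem _ _ (Submodule.subset_span ?_)
      simp only [Finset.mem_erase, Finset.mem_univ, and_true] at hj
      exact ⟨j.succ, Or.inr ⟨j, ⟨hj.1, hj.2⟩, rfl⟩, rfl⟩
    refine hreg _ (span_ne_top_aux β _ l.succ k.succ
      (fun h => hkl (Fin.succ_injective _ h.symm)) ?_ ?_) hmem
    · rintro (h | ⟨m, hm, hm2⟩)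
      · exact Fin.succ_ne_zero l h
      · exact hm.2 (Fin.succ_injective _ hm2)
    · rintro (h | ⟨m, hm, hm2⟩)
      · exact Fin.succ_ne_zero k h
      · exact hm.1 (Fin.succ_injective _ hm2)
  -- key characterization
  have key : ∀ l : Fin r, InCone β (Finset.univ.erase l.succ) ε ↔
      (0 < a l ∧ ∀ k, k ≠ l → c l * a k < c k * a l) := by
    intro l
    constructor
    · rintro ⟨d, hdnn, hd⟩
      have h0mem : (0 : Fin (r + 1)) ∈ Finset.univ.erase l.succ :=
        Finset.mem_erase.mpr ⟨(Fin.succ_ne_zero l).symm, Finset.mem_univ _⟩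
      have hd' : ε = d 0 • β 0 + ∑ j ∈ Finset.univ.erase l, d j.succ • β j.succ := by
        rw [hd, hsplit]
      have he : (fun j => d 0 * a j + if j = l then 0 else d j.succ) = c := by
        apply hrepr
        rw [hd', hβ0sum, Finset.smul_sum]
        have h1 : ∑ j ∈ Finset.univ.erase l, d j.succ • β j.succ
            = ∑ j, (if j = l then 0 else d j.succ) • β j.succ := by
          rw [← Finset.add_sum_erase _ (fun j => (if j = l then (0:ℝ) else d j.succ) • β j.succ)
            (Finset.mem_univ l)]
          simp only [eq_self_iff_true, if_true, zero_smul, zero_add]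
          refine Finset.sum_congr rfl fun j hj => ?_
          rw [if_neg (Finset.ne_of_mem_erase hj)]
        rw [h1, ← Finset.sum_add_distrib]
        refine Finset.sum_congr rfl fun j _ => ?_
        rw [smul_smul, ← add_smul]
      have hcl : c l = d 0 * a l := by
        have h := congrFun he l
        rw [if_pos rfl, add_zero] at h
        exact h.symm
      have hck : ∀ k, k ≠ l → c k = d 0 * a k + d k.succ := by
        intro k hk
        have h := congrFun he k
        rw [if_neg hk] at h
        exact h.symm
      have hd0pos : 0 < d 0 :=
        (hdnn 0 h0mem).lt_of_ne fun h0 => (hcpos l).ne' (by rw [hcl, ← h0, zero_mul])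
      have hal : 0 < a l := by nlinarith [hcpos l]
      refine ⟨hal, fun k hk => ?_⟩
      have h1 : 0 ≤ d k.succ :=
        hdnn k.succ (Finset.mem_erase.mpr ⟨fun h => hk (Fin.succ_injective _ h), Finset.mem_univ _⟩)
      have h2 : c k * a l - c l * a k = d k.succ * a l := by
        rw [hcl, hck k hk]; ring
      have h3 := hne l k hk hal
      have h4 : 0 < c k * a l - c l * a k := by
        refine lt_of_le_of_ne ?_ (Ne.symm h3)
        rw [h2]
        exact mul_nonneg h1 hal.le
      linarith
    · rintro ⟨hal, hlt⟩
      set t := c l / a l with ht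
      refine ⟨Fin.cases t (fun k => c k - t * a k), ?_, ?_⟩
      · intro i hi
        induction i using Fin.cases with
        | zero => exact le_of_lt (div_pos (hcpos l) hal)
        | succ k =>
          have hk : k ≠ l := by
            intro h
            exact (Finset.mem_erase.mp hi).1 (by rw [h])
          have h1 := hlt k hk
          simp only [Fin.cases_succ]
          have h2 : c k - t * a k = (c k * a l - c l * a k) / a l := by
            rw [ht]; field_simp
          rw [h2]
          exact le_of_lt (div_pos (by linarith) hal)
      · rw [hsplit]
        simp only [Fin.cases_zero, Fin.cases_succ]
        have hext : ∑ j ∈ Finset.univ.erase l, (c j - t * a j) • β j.succ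
            = ∑ j, (c j - t * a j) • β j.succ := by
          refine Finset.sum_subset (Finset.subset_univ _) ?_
          intro x _ hx
          simp only [Finset.mem_erase, Finset.mem_univ, and_true, not_not] at hx
          subst hx
          rw [show c x - t * a x = 0 by rw [ht]; field_simp; ring, zero_smul]
        rw [hext, hβ0sum, Finset.smul_sum, ← Finset.sum_add_distrib, hεsum]
        refine Finset.sum_congr rfl fun j _ => ?_
        rw [smul_smul, ← add_smul]
        congr 1
        ring
  -- existence of positive a
  have hapos : ∃ j, 0 < a j := by
    by_contra h
    push_neg at h
    have h1 : dotp (β 0) ξ = ∑ j, a j * dotp (β j.succ) ξ := by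
      rw [show dotp (β 0) ξ = ∑ i, β 0 i * ξ i from rfl, hβ0sum]
      simp only [Finset.sum_apply, Pi.smul_apply, smul_eq_mul, Finset.sum_mul]
      rw [Finset.sum_comm]
      refine Finset.sum_congr rfl fun j _ => ?_
      rw [show dotp (β j.succ) ξ = ∑ i, β j.succ i * ξ i from rfl, Finset.mul_sum]
      refine Finset.sum_congr rfl fun i _ => by ring
    have h2 : dotp (β 0) ξ ≤ 0 := by
      rw [h1]
      exact Finset.sum_nonpos fun j _ => mul_nonpos_of_nonpos_of_nonneg (h j) (hξ j.succ).le
    exact absurd (hξ 0) (not_lt.mpr h2)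
  -- pick minimizer
  obtain ⟨j₀, hj₀⟩ := hapos
  have hTne : (Finset.univ.filter (fun j => 0 < a j)).Nonempty :=
    ⟨j₀, Finset.mem_filter.mpr ⟨Finset.mem_univ _, hj₀⟩⟩
  obtain ⟨l, hlT, hlmin⟩ := Finset.exists_min_image _ (fun j => c j / a j) hTne
  have hal : 0 < a l := (Finset.mem_filter.mp hlT).2
  have hlcone : InCone β (Finset.univ.erase l.succ) ε := by
    refine (key l).mpr ⟨hal, fun k hk => ?_⟩
    rcases le_or_gt (a k) 0 with hak | hak
    · have := mul_pos (hcpos k) hal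
      nlinarith [hcpos l]
    · have hkT : k ∈ Finset.univ.filter (fun j => 0 < a j) :=
        Finset.mem_filter.mpr ⟨Finset.mem_univ _, hak⟩
      have h1 := hlmin k hkT
      have h2 : c l * a k ≤ c k * a l := by
        rw [div_le_div_iff₀ hal hak] at h1
        linarith
      have h3 := hne l k hk hal
      rcases h2.lt_or_eq with h | h
      · exact h
      · exact absurd (by linarith : c k * a l - c l * a k = 0) h3
  refine ⟨l.succ, ⟨Fin.succ_ne_zero l, hlcone⟩, ?_⟩
  rintro m ⟨hm0, hmc⟩
  obtain ⟨k, rfl⟩ := Fin.exists_succ_eq.mpr hm0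
  by_contra hkl'
  have hkl : k ≠ l := fun h => hkl' (by rw [h])
  obtain ⟨hak, hklt⟩ := (key k).mp hmc
  obtain ⟨_, hllt⟩ := (key l).mp hlcone
  have h1 := hllt k hkl
  have h2 := hklt l (fun h => hkl (h.symm ▸ rfl))
  linarith
end
end

section
/- Let β₀, β₁, …, β_r be nonzero vectors in ℝʳ such that β₁,…,β_r is a basis of ℝʳ, write β₀ = Σᵢ₌₁ʳ bᵢβᵢ, and let l ∈ {1,…,r} with b_l ≠ 0. Then in the fraction field Frac(ℝ[x₁,…,x_r]) the following identity holds: 1/(β₀·β₁⋯β̂_l⋯β_r) = (1/b_l)·1/(β₁⋯β_r) − Σ_{i=1, i≠l}^{r} (bᵢ/b_l)·1/(β₀·β₁⋯β̂ᵢ⋯β_r), where each product runs over the listed linear polynomials with the hatted factor omitted. -/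
open MvPolynomial

noncomputable section

lemma linPoly_ne_zero {r : ℕ} {v : Fin r → ℝ} (hv : v ≠ 0) : linPoly v ≠ 0 := by
  obtain ⟨i, hi⟩ := Function.ne_iff.mp hv
  intro h
  apply hi
  have := congrArg (MvPolynomial.coeff (Finsupp.single i 1)) h
  simpa [linPoly, MvPolynomial.coeff_sum, MvPolynomial.coeff_X', Finsupp.single_left_inj,
    Finset.sum_ite_eq] using this

lemma emb_linPoly_ne_zero {r : ℕ} {v : Fin r → ℝ} (hv : v ≠ 0) : emb (linPoly v) ≠ 0 := by
  have h := linPoly_ne_zero hv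
  simpa [emb, map_eq_zero_iff _ (IsFractionRing.injective (MvPolynomial (Fin r) ℝ) (Frac r))]

lemma cst_eq_algebraMap {r : ℕ} (a : ℝ) : (cst a : Frac r) = algebraMap ℝ (Frac r) a := by
  rw [cst, emb, ← MvPolynomial.algebraMap_eq, ← IsScalarTower.algebraMap_apply]

lemma linPoly_sum {r n : ℕ} (s : Finset (Fin n)) (c : Fin n → ℝ) (β : Fin n → Fin r → ℝ) :
    linPoly (∑ i ∈ s, c i • β i) = ∑ i ∈ s, C (c i) * linPoly (β i) := by
  unfold linPoly
  simp only [Finset.sum_apply, Pi.smul_apply, smul_eq_mul, map_sum, Finset.sum_mul,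
    Finset.mul_sum, map_mul, mul_assoc]
  rw [Finset.sum_comm]

lemma field_identity {K ι : Type*} [Field K] [DecidableEq ι] (E : Finset ι) (f c : ι → K)
    (i0 l : ι) (hlE : l ∈ E) (hfne : ∀ i, f i ≠ 0) (hcl : c l ≠ 0)
    (hf0 : f i0 = ∑ i ∈ E, c i * f i) :
    1 / (f i0 * ∏ i ∈ E.erase l, f i)
      = (c l)⁻¹ * (1 / ∏ i ∈ E, f i)
        - ∑ i ∈ E.erase l, (c i / c l) * (1 / (f i0 * ∏ j ∈ E.erase i, f j)) := by
  set P := ∏ i ∈ E, f i with hP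
  have hPne : P ≠ 0 := Finset.prod_ne_zero_iff.mpr fun i _ => hfne i
  have hD : f i0 * P ≠ 0 := mul_ne_zero (hfne i0) hPne
  have key : ∀ i ∈ E, (1 : K) / (f i0 * ∏ j ∈ E.erase i, f j) = f i / (f i0 * P) := by
    intro i hi
    have hQ : (∏ j ∈ E.erase i, f j) ≠ 0 := Finset.prod_ne_zero_iff.mpr fun j _ => hfne j
    rw [hP, ← Finset.mul_prod_erase E f hi,
      div_eq_div_iff (mul_ne_zero (hfne i0) hQ)
        (mul_ne_zero (hfne i0) (mul_ne_zero (hfne i) hQ))]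
    ring
  rw [key l hlE,
    Finset.sum_congr rfl (fun i hi => by rw [key i (Finset.mem_of_mem_erase hi)])]
  have hs : ∑ i ∈ E.erase l, (c i / c l) * (f i / (f i0 * P))
      = (c l)⁻¹ * ((f i0 - c l * f l) / (f i0 * P)) := by
    calc ∑ i ∈ E.erase l, (c i / c l) * (f i / (f i0 * P))
        = ∑ i ∈ E.erase l, (c l)⁻¹ * (c i * f i / (f i0 * P)) :=
          Finset.sum_congr rfl (fun i _ => by ring)
      _ = (c l)⁻¹ * ((∑ i ∈ E.erase l, c i * f i) / (f i0 * P)) := by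
          rw [← Finset.mul_sum, ← Finset.sum_div]
      _ = (c l)⁻¹ * ((f i0 - c l * f l) / (f i0 * P)) := by
          rw [Finset.sum_erase_eq_sub hlE, ← hf0]
  rw [hs]
  have hi0 : f i0 ≠ 0 := hfne i0
  field_simp
  ring

/-- The partial fraction identity
`1/(β₀β₁⋯β̂_l⋯β_r) = (1/b_l)·1/(β₁⋯β_r) − Σ_{i≠l} (bᵢ/b_l)·1/(β₀β₁⋯β̂ᵢ⋯β_r)`
in the fraction field of `ℝ[x₁,…,x_r]`, where `β₀ = Σ bᵢβᵢ` and `b_l ≠ 0`. -/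
theorem fraction_identity {r : ℕ} (β : Fin (r + 1) → Fin r → ℝ)
    (hβ : ∀ i, β i ≠ 0)
    (hindep : LinearIndependent ℝ (fun i : Fin r => β i.succ))
    (hspan : Submodule.span ℝ (Set.range fun i : Fin r => β i.succ) = ⊤)
    (b : Fin (r + 1) → ℝ)
    (hb : β 0 = ∑ i ∈ Finset.univ.erase 0, b i • β i)
    (l : Fin (r + 1)) (hl : l ≠ 0) (hbl : b l ≠ 0) :
    1 / (emb (linPoly (β 0)) * ∏ i ∈ (Finset.univ.erase 0).erase l, emb (linPoly (β i)))
      = cst (b l)⁻¹ * (1 / ∏ i ∈ Finset.univ.erase 0, emb (linPoly (β i)))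
        - ∑ i ∈ (Finset.univ.erase 0).erase l,
            cst (b i / b l) *
              (1 / (emb (linPoly (β 0)) *
                ∏ j ∈ (Finset.univ.erase 0).erase i, emb (linPoly (β j)))) := by
  have h1 : (cst (b l)⁻¹ : Frac r) = (cst (b l))⁻¹ := by
    rw [cst_eq_algebraMap, cst_eq_algebraMap, map_inv₀]
  have h2 : ∀ i, (cst (b i / b l) : Frac r) = cst (b i) / cst (b l) := fun i => by
    rw [cst_eq_algebraMap, cst_eq_algebraMap, cst_eq_algebraMap, map_div₀]
  have hcl : (cst (b l) : Frac r) ≠ 0 := by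
    rw [cst_eq_algebraMap]
    simpa using hbl
  have hf0 : emb (linPoly (β 0))
      = ∑ i ∈ Finset.univ.erase 0, cst (b i) * emb (linPoly (β i)) := by
    rw [hb, linPoly_sum]
    simp [emb, cst, map_sum, map_mul]
  rw [h1]
  simp only [h2]
  exact field_identity (Finset.univ.erase 0) (fun i => emb (linPoly (β i)))
    (fun i => cst (b i)) 0 l (Finset.mem_erase.mpr ⟨hl, Finset.mem_univ l⟩)
    (fun i => emb_linPoly_ne_zero (hβ i)) hcl hf0
end
end

section
/- Let β₀, β₁, …, β_r be vectors in ℝʳ such that β₁,…,β_r is a basis of ℝʳ. Write β₀ = Σᵢ₌₁ʳ bᵢβᵢ and ε = Σᵢ₌₁ʳ eᵢβᵢ with eᵢ > 0 for all i, and assume ε is regular with respect to the list [β₀, β₁, …, β_r]. Then for each l ∈ {1,…,r}: ε ∈ Cone(β₀, β₁, …, β̂_l, …, β_r) if and only if b_l > 0 and b_l/e_l > bᵢ/eᵢ for all i ∈ {1,…,r} with i ≠ l. -/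
open MvPolynomial

noncomputable section

/-- Let `β₁,…,β_r` be a basis of `ℝʳ`, `β₀ = Σ bᵢβᵢ`, `ε = Σ eᵢβᵢ` with all `eᵢ > 0`, and
`ε` regular with respect to `[β₀,…,β_r]`. Then for each `l ∈ {1,…,r}`,
`ε ∈ Cone(β₀,…,β̂_l,…,β_r)` iff `b_l > 0` and `b_l/e_l > bᵢ/eᵢ` for all `i ≠ l`. -/
theorem inCone_erase_iff {r : ℕ} (β : Fin (r + 1) → Fin r → ℝ)
    (hindep : LinearIndependent ℝ (fun i : Fin r => β i.succ))
    (hspan : Submodule.span ℝ (Set.range fun i : Fin r => β i.succ) = ⊤)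
    (b e : Fin (r + 1) → ℝ) (ε : Fin r → ℝ)
    (hb : β 0 = ∑ i ∈ Finset.univ.erase 0, b i • β i)
    (he : ε = ∑ i ∈ Finset.univ.erase 0, e i • β i)
    (hepos : ∀ i ∈ Finset.univ.erase (0 : Fin (r + 1)), 0 < e i)
    (hreg : RegularWrt β ε)
    (l : Fin (r + 1)) (hl : l ≠ 0) :
    InCone β (Finset.univ.erase l) ε ↔
      0 < b l ∧ ∀ i : Fin (r + 1), i ≠ 0 → i ≠ l → b i / e i < b l / e l := by
  classical
  have hr : 0 < r := by
    rcases Nat.eq_zero_or_pos r with rfl | hr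
    · exact absurd (Fin.fin_one_eq_zero l) hl
    · exact hr
  have hlm0 : l ∈ Finset.univ.erase (0 : Fin (r + 1)) :=
    Finset.mem_erase.mpr ⟨hl, Finset.mem_univ _⟩
  have h0ml : (0 : Fin (r + 1)) ∈ Finset.univ.erase l :=
    Finset.mem_erase.mpr ⟨Ne.symm hl, Finset.mem_univ _⟩
  have hel : 0 < e l := hepos l hlm0
  -- reindexing the sum over `univ.erase 0` as a sum over `Fin r`
  have hreindex : ∀ f : Fin (r + 1) → ℝ,
      ∑ i ∈ Finset.univ.erase 0, f i • β i = ∑ j : Fin r, f j.succ • β j.succ := by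
    intro f
    have h2 := Finset.add_sum_erase Finset.univ (fun i => f i • β i)
      (Finset.mem_univ (0 : Fin (r + 1)))
    rw [Fin.sum_univ_succ (f := fun i => f i • β i)] at h2
    exact add_left_cancel h2
  -- coordinates w.r.t. the basis are unique
  have hcoord : ∀ f g : Fin (r + 1) → ℝ,
      (∑ i ∈ Finset.univ.erase 0, f i • β i) = (∑ i ∈ Finset.univ.erase 0, g i • β i) →
      ∀ i : Fin (r + 1), i ≠ 0 → f i = g i := by
    intro f g hfg i hi
    have h1 : ∑ j : Fin r, (f j.succ - g j.succ) • β j.succ = 0 := by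
      simp only [sub_smul, Finset.sum_sub_distrib]
      rw [← hreindex f, ← hreindex g, hfg, sub_self]
    have h2 := Fintype.linearIndependent_iff.mp hindep (fun j => f j.succ - g j.succ) h1
    have h3 := h2 (i.pred hi)
    simp only [Fin.succ_pred] at h3
    linarith
  -- rewriting a cone combination in the basis
  have hrearr : ∀ c : Fin (r + 1) → ℝ,
      ∑ i ∈ Finset.univ.erase l, c i • β i
        = ∑ i ∈ Finset.univ.erase 0, (c 0 * b i + if i = l then 0 else c i) • β i := by
    intro c
    have e1 : ∑ i ∈ Finset.univ.erase l, c i • β i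
        = c 0 • β 0 + ∑ i ∈ (Finset.univ.erase l).erase 0, c i • β i :=
      (Finset.add_sum_erase _ _ h0ml).symm
    have e2 : (Finset.univ.erase l).erase (0 : Fin (r + 1))
        = (Finset.univ.erase 0).erase l := Finset.erase_right_comm
    have e3 : c 0 • β 0 = ∑ i ∈ Finset.univ.erase 0, (c 0 * b i) • β i := by
      rw [hb, Finset.smul_sum]
      simp [smul_smul]
    have e4 : ∑ i ∈ Finset.univ.erase 0, (if i = l then 0 else c i) • β i
        = ∑ i ∈ (Finset.univ.erase 0).erase l, c i • β i := by
      rw [← Finset.add_sum_erase _ (fun i => (if i = l then 0 else c i) • β i) hlm0]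
      simp only [ite_true, if_pos, zero_smul, zero_add]
      refine Finset.sum_congr rfl fun x hx => ?_
      rw [if_neg (Finset.mem_erase.mp hx).1]
    rw [e1, e2]
    simp only [add_smul, Finset.sum_add_distrib]
    rw [← e3, e4]
  constructor
  · rintro ⟨c, hc, hce⟩
    have key : ∀ i : Fin (r + 1), i ≠ 0 →
        e i = c 0 * b i + if i = l then 0 else c i := by
      intro i hi
      exact hcoord e (fun i => c 0 * b i + if i = l then 0 else c i)
        (by rw [← he, hce, hrearr c]) i hi
    have hlq : e l = c 0 * b l := by
      have := key l hl
      simpa using this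
    have hc0 : 0 ≤ c 0 := hc 0 h0ml
    have hc0pos : 0 < c 0 := by
      rcases hc0.lt_or_eq with h | h
      · exact h
      · exfalso; rw [← h, zero_mul] at hlq; linarith
    have hbl : 0 < b l := by nlinarith
    refine ⟨hbl, ?_⟩
    intro i hi0 hil
    have hkey := key i hi0
    rw [if_neg hil] at hkey
    have hiel : i ∈ Finset.univ.erase l := Finset.mem_erase.mpr ⟨hil, Finset.mem_univ _⟩
    have hci : 0 ≤ c i := hc i hiel
    have hei : 0 < e i := hepos i (Finset.mem_erase.mpr ⟨hi0, Finset.mem_univ _⟩)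
    have hcipos : 0 < c i := by
      rcases hci.lt_or_eq with h | h
      · exact h
      · exfalso
        set t := (Finset.univ.erase l).erase i with ht
        have hsum0 : ∑ j ∈ t, c j • β j = ∑ j ∈ Finset.univ.erase l, c j • β j :=
          Finset.sum_erase _ (by rw [← h, zero_smul])
        have hmem : ε ∈ Submodule.span ℝ (β '' ↑t) := by
          rw [hce, ← hsum0]
          exact Submodule.sum_mem _ fun j hj =>
            Submodule.smul_mem _ _ (Submodule.subset_span ⟨j, Finset.mem_coe.mpr hj, rfl⟩)
        have hcard : t.card = r - 1 := by
          rw [ht, Finset.card_erase_of_mem hiel, Finset.card_erase_of_mem (Finset.mem_univ l),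
            Finset.card_univ, Fintype.card_fin]
          omega
        have hne_top : Submodule.span ℝ (β '' ↑t) ≠ ⊤ := by
          intro htop
          have himg : β '' ↑t = ↑(t.image β) := (Finset.coe_image).symm
          have h1 : Module.finrank ℝ
              (Submodule.span ℝ (↑(t.image β) : Set (Fin r → ℝ))) ≤ (t.image β).card :=
            finrank_span_finset_le_card _
          have h2 : (t.image β).card ≤ t.card := Finset.card_image_le
          rw [himg] at htop
          rw [htop] at h1
          have h3 : Module.finrank ℝ (⊤ : Submodule ℝ (Fin r → ℝ)) = r := by
            rw [finrank_top, Module.finrank_fin_fun]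
          omega
        exact hreg ↑t hne_top hmem
    rw [div_lt_div_iff₀ hei hel]
    nlinarith [mul_pos hbl hcipos]
  · rintro ⟨hbl, hlt⟩
    set c : Fin (r + 1) → ℝ :=
      fun i => if i = 0 then e l / b l else e i - e l / b l * b i with hcdef
    have hc0v : c 0 = e l / b l := by simp [hcdef]
    refine ⟨c, ?_, ?_⟩
    · intro i hi
      rcases eq_or_ne i 0 with rfl | hi0
      · rw [hc0v]; positivity
      · have hil : i ≠ l := (Finset.mem_erase.mp hi).1
        have hei : 0 < e i := hepos i (Finset.mem_erase.mpr ⟨hi0, Finset.mem_univ _⟩)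
        have hkey : b i * e l < b l * e i := (div_lt_div_iff₀ hei hel).mp (hlt i hi0 hil)
        simp only [hcdef, if_neg hi0]
        rw [div_mul_eq_mul_div, sub_nonneg, div_le_iff₀ hbl]
        nlinarith
    · rw [he, hrearr c]
      refine Finset.sum_congr rfl fun i hi => ?_
      have hi0 := (Finset.mem_erase.mp hi).1
      congr 1
      rcases eq_or_ne i l with rfl | hil
      · rw [hc0v, if_pos rfl, add_zero, div_mul_cancel₀ _ hbl.ne']
      · rw [hc0v, if_neg hil]
        simp only [hcdef, if_neg hi0]
        ring
end
end

section
/- Let 𝔄 = [α₁,…,αₙ] be a polarized list of nonzero vectors spanning ℝʳ, let c be a chamber of 𝔄, and let σ ⊆ {1,…,n} be such that (αⱼ)_{j∈σ} is a basis of ℝʳ. Then c ∩ Cone(αⱼ : j ∈ σ) ≠ ∅ if and only if c ⊆ Cone(αⱼ : j ∈ σ). -/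
open MvPolynomial

noncomputable section

/-- For a chamber `c` of a polarized spanning list `𝔄` and a basis `(αⱼ)_{j∈σ}` from `𝔄`,
the chamber `c` meets `Cone(αⱼ : j ∈ σ)` iff it is contained in it. -/
theorem chamber_inter_cone_iff_subset {r n : ℕ} (α : Fin n → Fin r → ℝ)
    (hα : ∀ i, α i ≠ 0) (hpol : Polarized α)
    (hspan : Submodule.span ℝ (Set.range α) = ⊤)
    (c : Set (Fin r → ℝ)) (hc : IsChamber α c)
    (σ : Finset (Fin n)) (hσ : IsConeBasis α σ) :
    (c ∩ coneSet α σ).Nonempty ↔ c ⊆ coneSet α σ := by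
  classical
  obtain ⟨x0, hx0, rfl⟩ := hc
  set S := chamberComplement α with hS
  obtain ⟨hind, hspanσ⟩ := hσ
  have hrange : Set.range (fun j : {x // x ∈ σ} => α j.1) = α '' ↑σ :=
    (Set.image_eq_range α (↑σ : Set (Fin n))).symm
  let B : Module.Basis {x // x ∈ σ} ℝ (Fin r → ℝ) :=
    Module.Basis.mk hind (by rw [hrange, hspanσ])
  have hB : ∀ j, B j = α j.1 := fun j => by simp [B]
  -- cone membership via coordinates
  have hcone : ∀ v, InCone α σ v ↔ ∀ j : {x // x ∈ σ}, 0 ≤ B.repr v j := by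
    intro v
    constructor
    · rintro ⟨cf, hcf, rfl⟩ j
      have hsum : (∑ i ∈ σ, cf i • α i) = ∑ k : {x // x ∈ σ}, cf k.1 • B k := by
        rw [← Finset.sum_coe_sort σ (fun i => cf i • α i)]
        exact Finset.sum_congr rfl (fun k _ => by rw [hB])
      rw [hsum]
      have : B.repr (∑ k : {x // x ∈ σ}, cf k.1 • B k) j = cf j.1 := by
        simp [map_sum, Finsupp.single_apply]
      rw [this]
      exact hcf j.1 j.2
    · intro h
      refine ⟨fun i => if hi : i ∈ σ then B.repr v ⟨i, hi⟩ else 0, ?_, ?_⟩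
      · intro i hi
        simpa [dif_pos hi] using h ⟨i, hi⟩
      · have : (∑ i ∈ σ, (if hi : i ∈ σ then B.repr v ⟨i, hi⟩ else 0) • α i)
            = ∑ k : {x // x ∈ σ}, B.repr v k • B k := by
          rw [← Finset.sum_coe_sort σ
            (fun i => (if hi : i ∈ σ then B.repr v ⟨i, hi⟩ else 0) • α i)]
          exact Finset.sum_congr rfl (fun k _ => by rw [dif_pos k.2, hB])
        rw [this, B.sum_repr v]
  -- each coordinate-zero set lies in a hyperplane of α, hence coordinates
  -- do not vanish on the chamber complement
  have hkey : ∀ (j : {x // x ∈ σ}) (v : Fin r → ℝ), v ∈ S → B.repr v j ≠ 0 := by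
    intro j v hv hv0
    have himg : α '' ((↑σ : Set (Fin n)) \ {(j : Fin n)}) = B '' {k | k ≠ j} := by
      ext w
      simp only [Set.mem_image, Set.mem_diff, Set.mem_singleton_iff, Set.mem_setOf_eq]
      constructor
      · rintro ⟨i, ⟨hi, hne⟩, rfl⟩
        exact ⟨⟨i, hi⟩, fun h => hne (congrArg Subtype.val h), (hB ⟨i, hi⟩)⟩
      · rintro ⟨k, hk, rfl⟩
        exact ⟨k.1, ⟨k.2, fun h => hk (Subtype.ext h)⟩, (hB k).symm⟩
    have hmem : v ∈ Submodule.span ℝ (α '' ((↑σ : Set (Fin n)) \ {(j : Fin n)})) := by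
      rw [himg]
      refine B.mem_span_image.2 ?_
      intro k hk
      simp only [Finset.mem_coe, Finsupp.mem_support_iff] at hk
      intro hkj
      exact hk (by rw [hkj] at *; exact hv0)
    have hhyp : IsHyperplaneOf α (Submodule.span ℝ (α '' ((↑σ : Set (Fin n)) \ {(j : Fin n)}))) := by
      constructor
      · exact ⟨_, rfl⟩
      · have hre : α '' ((↑σ : Set (Fin n)) \ {(j : Fin n)})
            = Set.range (fun k : {k : {x // x ∈ σ} // k ≠ j} => B k.1) := by
          rw [himg]
          exact Set.image_eq_range _ _
        rw [hre]
        have hli : LinearIndependent ℝ (fun k : {k : {x // x ∈ σ} // k ≠ j} => B k.1) :=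
          B.linearIndependent.comp Subtype.val Subtype.val_injective
        rw [finrank_span_eq_card hli]
        have h1 : Fintype.card {k : {x // x ∈ σ} // k ≠ j}
            = Fintype.card {x // x ∈ σ} - 1 := by
          simp [Fintype.card_subtype_compl]
        have h2 : Fintype.card {x // x ∈ σ} = r := by
          have := Module.finrank_eq_card_basis B
          rw [Module.finrank_fin_fun] at this
          omega
        rw [h1, h2]
    have : v ∉ Submodule.span ℝ (α '' ((↑σ : Set (Fin n)) \ {(j : Fin n)})) := by
      intro hmem'
      exact hv.2 (Set.mem_biUnion hhyp hmem')
    exact this hmem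
  have hsub : connectedComponentIn S x0 ⊆ S := connectedComponentIn_subset S x0
  have hconn : IsPreconnected (connectedComponentIn S x0) := isPreconnected_connectedComponentIn
  -- constant sign of coordinates on the chamber
  have hsign : ∀ (j : {x // x ∈ σ}) (y : Fin r → ℝ), y ∈ connectedComponentIn S x0 →
      ∀ z ∈ connectedComponentIn S x0, 0 < B.repr y j → 0 < B.repr z j := by
    intro j y hy z hz hypos
    by_contra hle
    push_neg at hle
    have hzneg : B.repr z j < 0 := lt_of_le_of_ne hle (hkey j z (hsub hz))
    have hfc : Continuous (B.coord j) := (B.coord j).continuous_of_finiteDimensional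
    have himgc : IsPreconnected ((B.coord j) '' connectedComponentIn S x0) :=
      hconn.image _ hfc.continuousOn
    have hord := himgc.ordConnected
    have h0 : (0 : ℝ) ∈ (B.coord j) '' connectedComponentIn S x0 := by
      refine hord.out (Set.mem_image_of_mem _ hz) (Set.mem_image_of_mem _ hy) ?_
      constructor
      · simpa [Module.Basis.coord_apply] using hzneg.le
      · simpa [Module.Basis.coord_apply] using hypos.le
    obtain ⟨w, hw, hw0⟩ := h0
    exact hkey j w (hsub hw) (by simpa [Module.Basis.coord_apply] using hw0)
  constructor
  · rintro ⟨y, hyc, hycone⟩ z hz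
    have hycone' := (hcone y).1 hycone
    refine (hcone z).2 (fun j => ?_)
    have hypos : 0 < B.repr y j :=
      lt_of_le_of_ne (hycone' j) (Ne.symm (hkey j y (hsub hyc)))
    exact (hsign j y hyc z hz hypos).le
  · intro hs
    exact ⟨x0, mem_connectedComponentIn hx0, hs (mem_connectedComponentIn hx0)⟩
end
end

section
/- Let 𝔄 = [α₁,…,αₙ] be a polarized list of nonzero vectors spanning ℝʳ and let c be a chamber of 𝔄. Let W ∈ ℋ(𝔄) be a hyperplane, say W = ker f for a nonzero linear functional f on ℝʳ with f > 0 on c (such a sign choice exists since c is connected and disjoint from W), and suppose that w := (closure of c) ∩ W spans W. Let σ ⊆ {1,…,n} be such that (αⱼ)_{j∈σ} is a basis of ℝʳ and f(αⱼ) ≥ 0 for all j ∈ σ. Then w ⊆ Cone(αⱼ : j ∈ σ) if and only if c ⊆ Cone(αⱼ : j ∈ σ). -/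
open MvPolynomial

noncomputable section

/-- Let `c` be a chamber of a polarized spanning list `𝔄`, let `W = ker f ∈ ℋ(𝔄)` with
`f > 0` on `c`, and suppose `w = closure c ∩ W` spans `W`. If `(αⱼ)_{j∈σ}` is a basis from
`𝔄` with `f(αⱼ) ≥ 0` for all `j ∈ σ`, then `w ⊆ Cone(αⱼ : j ∈ σ)` iff
`c ⊆ Cone(αⱼ : j ∈ σ)`. -/
theorem wall_subset_cone_iff_chamber_subset {r n : ℕ} (α : Fin n → Fin r → ℝ)
    (hα : ∀ i, α i ≠ 0) (hpol : Polarized α)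
    (hspan : Submodule.span ℝ (Set.range α) = ⊤)
    (c : Set (Fin r → ℝ)) (hc : IsChamber α c)
    (W : Submodule ℝ (Fin r → ℝ)) (hW : IsHyperplaneOf α W)
    (f : (Fin r → ℝ) →ₗ[ℝ] ℝ) (hf : f ≠ 0) (hWf : W = LinearMap.ker f)
    (hfc : ∀ x ∈ c, 0 < f x)
    (hwspan : Submodule.span ℝ (closure c ∩ (W : Set (Fin r → ℝ))) = W)
    (σ : Finset (Fin n)) (hσ : IsConeBasis α σ) (hσf : ∀ j ∈ σ, 0 ≤ f (α j)) :
    closure c ∩ (W : Set (Fin r → ℝ)) ⊆ coneSet α σ ↔ c ⊆ coneSet α σ := by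
  obtain ⟨hind, hsp⟩ := hσ
  have hspan' : ⊤ ≤ Submodule.span ℝ (Set.range fun j : {x // x ∈ σ} => α j.1) := by
    rw [show (Set.range fun j : {x // x ∈ σ} => α j.1) = α '' ↑σ from
      (Set.image_eq_range _ _).symm]
    exact hsp.ge
  set b : Module.Basis {x // x ∈ σ} ℝ (Fin r → ℝ) := Module.Basis.mk hind hspan' with hbdef
  have hb : ∀ j, b j = α j.1 := fun j => Module.Basis.mk_apply hind hspan' j
  have key : ∀ v, InCone α σ v ↔ ∀ j : {x // x ∈ σ}, 0 ≤ b.repr v j := by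
    intro v
    constructor
    · rintro ⟨cc, hcc, rfl⟩
      intro j
      have hsum : (∑ i ∈ σ, cc i • α i) = ∑ k : {x // x ∈ σ}, cc k.1 • b k := by
        simp only [hb]
        exact (Finset.sum_coe_sort σ (fun i => cc i • α i)).symm
      rw [hsum, Module.Basis.repr_sum_self]
      exact hcc j.1 j.2
    · intro h
      refine ⟨fun i => if h' : i ∈ σ then b.repr v ⟨i, h'⟩ else 0, fun i hi => ?_, ?_⟩
      · simp only [dif_pos hi]; exact h ⟨i, hi⟩
      · have : (∑ i ∈ σ, (if h' : i ∈ σ then b.repr v ⟨i, h'⟩ else 0) • α i)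
            = ∑ k : {x // x ∈ σ}, b.repr v k • b k := by
          rw [← Finset.sum_coe_sort σ]
          exact Finset.sum_congr rfl fun k _ => by rw [dif_pos k.2, hb]
        rw [this, Module.Basis.sum_repr]
  -- the cone is closed
  have hcone_eq : coneSet α σ =
      ⋂ j : {x // x ∈ σ}, (b.coord j) ⁻¹' Set.Ici (0 : ℝ) := by
    ext v
    simp only [coneSet, Set.mem_setOf_eq, Set.mem_iInter, Set.mem_preimage, Set.mem_Ici,
      Module.Basis.coord_apply]
    exact key v
  have hclosed : IsClosed (coneSet α σ) := by
    rw [hcone_eq]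
    exact isClosed_iInter fun j =>
      IsClosed.preimage (b.coord j).continuous_of_finiteDimensional isClosed_Ici
  constructor
  · -- hard direction
    intro hw x hxc
    obtain ⟨x₀, hx₀mem, hc_eq⟩ := hc
    have hcsub : c ⊆ chamberComplement α := by
      rw [hc_eq]; exact connectedComponentIn_subset _ _
    have hcconn : IsPreconnected c := by
      rw [hc_eq]; exact isPreconnected_connectedComponentIn
    rw [show x ∈ coneSet α σ ↔ InCone α σ x from Iff.rfl, key x]
    intro j
    by_contra hneg
    push_neg at hneg
    set g : (Fin r → ℝ) →ₗ[ℝ] ℝ := b.coord j with hgdef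
    have hgx : g x < 0 := hneg
    have hgb : g (α j.1) = 1 := by
      rw [hgdef, ← hb j, Module.Basis.coord_apply, Module.Basis.repr_self, Finsupp.single_eq_same]
    -- kernel of g equals span of the other vectors
    have hker : LinearMap.ker g = Submodule.span ℝ (α '' ((↑σ : Set (Fin n)) \ {j.1})) := by
      apply le_antisymm
      · intro v hv
        have hrep : v = ∑ k : {x // x ∈ σ}, b.repr v k • b k := (Module.Basis.sum_repr b v).symm
        rw [hrep]
        refine Submodule.sum_mem _ fun k _ => ?_
        by_cases hk : k = j
        · have : b.repr v k = 0 := by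
            rw [hk]
            simpa [hgdef, Module.Basis.coord_apply] using hv
          simp [this]
        · refine Submodule.smul_mem _ _ (Submodule.subset_span ?_)
          exact ⟨k.1, ⟨k.2, fun h => hk (Subtype.ext h)⟩, (hb k).symm⟩
      · rw [Submodule.span_le]
        rintro _ ⟨i, ⟨hiσ, hij⟩, rfl⟩
        have : g (b ⟨i, hiσ⟩) = 0 := by
          rw [hgdef, Module.Basis.coord_apply, Module.Basis.repr_self, Finsupp.single_apply]
          rw [if_neg]
          intro h
          exact hij (congrArg Subtype.val h)
        rw [hb] at this
        exact this
    have hghyp : IsHyperplaneOf α (LinearMap.ker g) := by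
      constructor
      · exact ⟨(↑σ : Set (Fin n)) \ {j.1}, hker⟩
      · have hrange : LinearMap.range g = ⊤ := by
          rw [LinearMap.range_eq_top]
          intro t
          exact ⟨t • α j.1, by rw [map_smul, hgb, smul_eq_mul, mul_one]⟩
        have h1 : Module.finrank ℝ (LinearMap.range g) + Module.finrank ℝ (LinearMap.ker g)
            = Module.finrank ℝ (Fin r → ℝ) := g.finrank_range_add_finrank_ker
        rw [hrange, finrank_top, Module.finrank_self, Module.finrank_fin_fun] at h1
        omega
    -- g is nonzero on c
    have hg_ne : ∀ y ∈ c, g y ≠ 0 := by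
      intro y hy hgy
      have := (hcsub hy).2
      apply this
      simp only [Set.mem_iUnion]
      exact ⟨LinearMap.ker g, hghyp, hgy⟩
    -- g is negative on c by connectedness
    have hgneg : ∀ y ∈ c, g y < 0 := by
      intro y hy
      rcases lt_or_ge (g y) 0 with h | h
      · exact h
      have hy' : 0 < g y := lt_of_le_of_ne h (Ne.symm (hg_ne y hy))
      have himg : IsPreconnected (g '' c) :=
        hcconn.image g g.continuous_of_finiteDimensional.continuousOn
      have hoc := himg.ordConnected
      have h0 : (0 : ℝ) ∈ g '' c := by
        refine hoc.out ⟨x, hxc, rfl⟩ ⟨y, hy, rfl⟩ ?_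
        exact ⟨le_of_lt hgx, le_of_lt hy'⟩
      obtain ⟨z, hz, hgz⟩ := h0
      exact (hg_ne z hz hgz).elim
    -- g ≤ 0 on the closure of c
    have hgcl : ∀ z ∈ closure c, g z ≤ 0 := by
      have hsubset : closure c ⊆ {y | g y ≤ 0} := by
        apply closure_minimal
        · intro y hy; exact le_of_lt (hgneg y hy)
        · exact isClosed_le g.continuous_of_finiteDimensional continuous_const
      exact fun z hz => hsubset hz
    -- hence the wall lies in ker g
    have hwker : closure c ∩ (W : Set (Fin r → ℝ)) ⊆ (LinearMap.ker g : Set (Fin r → ℝ)) := by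
      intro z hz
      have h1 : g z ≤ 0 := hgcl z hz.1
      have h2 : 0 ≤ g z := by
        have := (key z).mp (hw hz) j
        simpa [hgdef, Module.Basis.coord_apply] using this
      exact le_antisymm h1 h2
    have hWle : W ≤ LinearMap.ker g := by
      rw [← hwspan, Submodule.span_le]
      exact hwker
    have hWeq : W = LinearMap.ker g := by
      apply Submodule.eq_of_le_of_finrank_eq hWle
      rw [hW.2, hghyp.2]
    -- f is a scalar multiple of g
    have hfg : ∀ v, f v = f (α j.1) * g v := by
      intro v
      have hv : v - g v • α j.1 ∈ LinearMap.ker g := by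
        rw [LinearMap.mem_ker, map_sub, map_smul, hgb, smul_eq_mul, mul_one, sub_self]
      rw [← hWeq, hWf, LinearMap.mem_ker] at hv
      have : f v - g v * f (α j.1) = 0 := by
        rw [← hv, map_sub, map_smul, smul_eq_mul]
      linarith [this]
    have hfx : 0 < f x := hfc x hxc
    have hfa : 0 ≤ f (α j.1) := hσf j.1 j.2
    have : f x ≤ 0 := by
      rw [hfg x]
      exact mul_nonpos_of_nonneg_of_nonpos hfa (le_of_lt hgx)
    linarith
  · -- easy direction
    intro hcc z hz
    have : closure c ⊆ coneSet α σ := closure_minimal hcc hclosed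
    exact this hz.1
end
end

section
/- Geometric description of the ideal I_{𝔄,ε}. Let 𝔄 = [α₁,…,αₙ] be a polarized list of nonzero vectors in ℝʳ and let ε ∈ ℝʳ be regular with respect to 𝔄 with ε ∈ Cone(α₁,…,αₙ). Then I_{𝔄,ε} equals the ideal of ℝ[x₁,…,x_r] generated by the products ∏_{i : αᵢ ∈ H⁺} αᵢ, where H ranges over the hyperplanes of ℝʳ spanned by subsets of {α₁,…,αₙ} and H⁺ denotes the open half-space bounded by H that contains ε (well-defined since ε is regular, hence ε ∉ H). -/
open MvPolynomial

noncomputable section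

section JKAux

variable {r n : ℕ}

/-- Farkas' lemma, proved algebraically by induction on the generating finset. -/
private lemma farkas_aux (s : Finset (Fin n)) :
    ∀ (α : Fin n → Fin r → ℝ) (b : Fin r → ℝ), ¬ InCone α s b →
      ∃ f : (Fin r → ℝ) →ₗ[ℝ] ℝ, (∀ i ∈ s, f (α i) ≤ 0) ∧ 0 < f b := by
  classical
  induction s using Finset.induction_on with
  | empty =>
    intro α b hb
    have hb0 : b ≠ 0 := by
      rintro rfl
      exact hb ⟨0, by simp, by simp⟩
    refine ⟨∑ i : Fin r, b i • LinearMap.proj i, by simp, ?_⟩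
    have hval : (∑ i : Fin r, b i • (LinearMap.proj i : (Fin r → ℝ) →ₗ[ℝ] ℝ)) b
        = ∑ i : Fin r, b i * b i := by
      simp [smul_eq_mul]
    rw [hval]
    obtain ⟨j, hj⟩ := Function.ne_iff.1 hb0
    exact Finset.sum_pos' (fun i _ => mul_self_nonneg _)
      ⟨j, Finset.mem_univ j, mul_self_pos.2 hj⟩
  | @insert a s ha ih =>
    intro α b hb
    have hbs : ¬ InCone α s b := by
      rintro ⟨c, hc, rfl⟩
      refine hb ⟨Function.update c a 0, ?_, ?_⟩
      · intro i hi
        rcases Finset.mem_insert.1 hi with rfl | hi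
        · simp
        · rw [Function.update_of_ne (ne_of_mem_of_not_mem hi ha)]
          exact hc i hi
      · rw [Finset.sum_insert ha, Function.update_self, zero_smul, zero_add]
        exact Finset.sum_congr rfl fun i hi => by
          rw [Function.update_of_ne (ne_of_mem_of_not_mem hi ha)]
    obtain ⟨f, hfs, hfb⟩ := ih α b hbs
    by_cases hfa : f (α a) ≤ 0
    · refine ⟨f, fun i hi => ?_, hfb⟩
      rcases Finset.mem_insert.1 hi with rfl | hi
      · exact hfa
      · exact hfs i hi
    push_neg at hfa
    set A := f (α a) with hA
    have hAne : A ≠ 0 := ne_of_gt hfa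
    set α' : Fin n → Fin r → ℝ := fun i => A • α i - f (α i) • α a with hα'
    set b' : Fin r → ℝ := A • b - f b • α a with hb'
    have hb's : ¬ InCone α' s b' := by
      rintro ⟨c, hc, hsum⟩
      apply hb
      refine ⟨Function.update c a ((f b - ∑ i ∈ s, c i * f (α i)) / A), ?_, ?_⟩
      · intro i hi
        rcases Finset.mem_insert.1 hi with rfl | hi
        · rw [Function.update_self]
          apply div_nonneg _ hfa.le
          have hsn : ∑ i ∈ s, c i * f (α i) ≤ 0 :=
            Finset.sum_nonpos fun i hi =>
              mul_nonpos_of_nonneg_of_nonpos (hc i hi) (hfs i hi)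
          linarith
        · rw [Function.update_of_ne (ne_of_mem_of_not_mem hi ha)]
          exact hc i hi
      · rw [Finset.sum_insert ha, Function.update_self]
        have hupd : ∑ i ∈ s, Function.update c a ((f b - ∑ i ∈ s, c i * f (α i)) / A) i • α i
            = ∑ i ∈ s, c i • α i :=
          Finset.sum_congr rfl fun i hi => by
            rw [Function.update_of_ne (ne_of_mem_of_not_mem hi ha)]
        rw [hupd]
        apply smul_right_injective (Fin r → ℝ) hAne
        show A • b = A • (((f b - ∑ i ∈ s, c i * f (α i)) / A) • α a + ∑ i ∈ s, c i • α i)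
        have h1 : A • b = b' + f b • α a := by rw [hb']; abel
        rw [h1, hsum, smul_add, smul_smul,
          mul_comm A ((f b - ∑ i ∈ s, c i * f (α i)) / A), div_mul_cancel₀ _ hAne]
        have hL : ∑ i ∈ s, c i • α' i
            = ∑ i ∈ s, (A • (c i • α i) - (c i * f (α i)) • α a) :=
          Finset.sum_congr rfl fun i _ => by
            simp only [hα', smul_sub, smul_smul]
            rw [mul_comm (c i) A]
        rw [hL, Finset.sum_sub_distrib, ← Finset.smul_sum, ← Finset.sum_smul, sub_smul]
        abel
    obtain ⟨g, hgs, hgb⟩ := ih α' b' hb's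
    refine ⟨A • g - g (α a) • f, ?_, ?_⟩
    · intro i hi
      rcases Finset.mem_insert.1 hi with rfl | hi
      · simp only [LinearMap.sub_apply, LinearMap.smul_apply, smul_eq_mul]
        ring_nf
        simp [mul_comm]
        exact le_of_eq (by rw [hA])
      · have hgi := hgs i hi
        simp only [hα', map_sub, map_smul, smul_eq_mul] at hgi
        simp only [LinearMap.sub_apply, LinearMap.smul_apply, smul_eq_mul]
        linarith
    · have := hgb
      simp only [hb', map_sub, map_smul, smul_eq_mul] at this
      simp only [LinearMap.sub_apply, LinearMap.smul_apply, smul_eq_mul]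
      linarith

/-- If `f` is nonzero then its kernel has rank `r - 1`. -/
private lemma finrank_ker_eq (f : (Fin r → ℝ) →ₗ[ℝ] ℝ) {x : Fin r → ℝ} (hx : f x ≠ 0) :
    Module.finrank ℝ (LinearMap.ker f) = r - 1 := by
  have hrange : LinearMap.range f = ⊤ := by
    rcases Ideal.eq_bot_or_top (LinearMap.range f) with h | h
    · exfalso
      apply hx
      have : f x ∈ LinearMap.range f := ⟨x, rfl⟩
      rw [h] at this
      simpa using this
    · exact h
  have hrk := LinearMap.finrank_range_add_finrank_ker f
  rw [hrange, finrank_top, Module.finrank_self, Module.finrank_fin_fun] at hrk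
  omega

/-- One perturbation step: enlarge the span of the vanishing vectors. -/
private lemma perturb_step (α : Fin n → Fin r → ℝ)
    (hspan : Submodule.span ℝ (Set.range α) = ⊤) (J : Finset (Fin n)) (ε : Fin r → ℝ)
    (f : (Fin r → ℝ) →ₗ[ℝ] ℝ) (h1 : ∀ i ∈ Jᶜ, f (α i) ≤ 0) (h2 : 0 < f ε)
    (hW : Submodule.span ℝ (α '' {i | f (α i) = 0}) ⊔ (Submodule.span ℝ {ε}) ≠ ⊤) :
    ∃ f' : (Fin r → ℝ) →ₗ[ℝ] ℝ, (∀ i ∈ Jᶜ, f' (α i) ≤ 0) ∧ 0 < f' ε ∧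
      Module.finrank ℝ (Submodule.span ℝ (α '' {i | f (α i) = 0})) <
        Module.finrank ℝ (Submodule.span ℝ (α '' {i | f' (α i) = 0})) := by
  classical
  set W : Submodule ℝ (Fin r → ℝ) :=
    Submodule.span ℝ (α '' {i | f (α i) = 0}) ⊔ (Submodule.span ℝ {ε}) with hWdef
  obtain ⟨g₀, hg₀ne, hg₀map⟩ :=
    Submodule.exists_dual_map_eq_bot_of_lt_top (lt_top_iff_ne_top.2 hW) inferInstance
  have hg₀W : ∀ x ∈ W, g₀ x = 0 := by
    intro x hx
    have : g₀ x ∈ W.map g₀ := Submodule.mem_map_of_mem hx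
    rw [hg₀map] at this
    simpa using this
  have hZW : ∀ i, f (α i) = 0 → α i ∈ W :=
    fun i hi => le_sup_left (α := Submodule ℝ (Fin r → ℝ))
      (Submodule.subset_span ⟨i, hi, rfl⟩)
  have hεW : ε ∈ W := le_sup_right (α := Submodule ℝ (Fin r → ℝ))
    (Submodule.subset_span rfl)
  obtain ⟨i₀, hi₀⟩ : ∃ i, g₀ (α i) ≠ 0 := by
    by_contra hc
    push_neg at hc
    apply hg₀ne
    have : Submodule.span ℝ (Set.range α) ≤ LinearMap.ker g₀ := by
      rw [Submodule.span_le]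
      rintro _ ⟨i, rfl⟩
      exact hc i
    rw [hspan, top_le_iff] at this
    exact LinearMap.ker_eq_top.1 this
  have hfi₀ : f (α i₀) ≠ 0 := fun h => hi₀ (hg₀W _ (hZW i₀ h))
  set g : (Fin r → ℝ) →ₗ[ℝ] ℝ :=
    if 0 < -f (α i₀) / g₀ (α i₀) then g₀ else -g₀ with hgdef
  have hgW : ∀ x ∈ W, g x = 0 := by
    intro x hx
    rw [hgdef]
    split
    · exact hg₀W x hx
    · simp [hg₀W x hx]
  have hgi₀pos : 0 < -f (α i₀) / g (α i₀) := by
    by_cases h : 0 < -f (α i₀) / g₀ (α i₀)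
    · rw [hgdef, if_pos h]
      exact h
    · rw [hgdef, if_neg h]
      push_neg at h
      have hne : -f (α i₀) / g₀ (α i₀) ≠ 0 :=
        div_ne_zero (neg_ne_zero.2 hfi₀) hi₀
      have hlt : -f (α i₀) / g₀ (α i₀) < 0 := lt_of_le_of_ne h hne
      simp only [LinearMap.neg_apply, div_neg]
      linarith
  set t : Fin n → ℝ := fun i => -f (α i) / g (α i) with htdef
  set P : Finset (Fin n) := Finset.univ.filter fun i => 0 < t i with hPdef
  have hPne : P.Nonempty := ⟨i₀, by simp [hPdef, htdef, hgi₀pos]⟩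
  obtain ⟨i₁, hi₁P, hi₁min⟩ := P.exists_min_image t hPne
  have hτpos : 0 < t i₁ := by
    have := hi₁P
    simp only [hPdef, Finset.mem_filter] at this
    exact this.2
  have hgi₁ : g (α i₁) ≠ 0 := by
    intro h
    rw [htdef] at hτpos
    simp only [h, div_zero] at hτpos
    exact lt_irrefl 0 hτpos
  have hgZ : ∀ i, f (α i) = 0 → g (α i) = 0 := fun i hi => hgW _ (hZW i hi)
  set f' : (Fin r → ℝ) →ₗ[ℝ] ℝ := f + t i₁ • g with hf'def
  have hf'val : ∀ x, f' x = f x + t i₁ * g x := fun x => by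
    simp [hf'def]
  have hZZ' : ∀ i, f (α i) = 0 → f' (α i) = 0 := by
    intro i hi
    rw [hf'val, hi, hgZ i hi, mul_zero, add_zero]
  have hi₁0 : f' (α i₁) = 0 := by
    rw [hf'val, htdef]
    field_simp
    ring
  refine ⟨f', ?_, ?_, ?_⟩
  · intro i hi
    have hfi := h1 i hi
    rw [hf'val]
    rcases lt_trichotomy (g (α i)) 0 with hg | hg | hg
    · nlinarith
    · rw [hg, mul_zero, add_zero]; exact hfi
    · have hfine : f (α i) ≠ 0 := fun h => (ne_of_gt hg) (hgZ i h)
      have hfilt : f (α i) < 0 := lt_of_le_of_ne hfi hfine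
      have htipos : 0 < t i := by
        rw [htdef]
        exact div_pos (by linarith) hg
      have hiP : i ∈ P := by simp [hPdef, htipos]
      have hle : t i₁ ≤ t i := hi₁min i hiP
      have : t i₁ * g (α i) ≤ t i * g (α i) :=
        mul_le_mul_of_nonneg_right hle hg.le
      have hti : t i * g (α i) = -f (α i) := by
        rw [htdef]
        field_simp
      linarith
  · rw [hf'val, hgW ε hεW, mul_zero, add_zero]; exact h2
  · have hle : Submodule.span ℝ (α '' {i | f (α i) = 0}) ≤
        Submodule.span ℝ (α '' {i | f' (α i) = 0}) :=
      Submodule.span_mono (Set.image_mono fun i hi => hZZ' i hi)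
    have hmem : α i₁ ∈ Submodule.span ℝ (α '' {i | f' (α i) = 0}) :=
      Submodule.subset_span ⟨i₁, hi₁0, rfl⟩
    have hnmem : α i₁ ∉ Submodule.span ℝ (α '' {i | f (α i) = 0}) := by
      intro h
      have : α i₁ ∈ W := le_sup_left (α := Submodule ℝ (Fin r → ℝ)) h
      exact hgi₁ (hgW _ this)
    exact Submodule.finrank_lt_finrank_of_lt (lt_of_le_of_ne hle fun h => hnmem (h ▸ hmem))

/-- Iterate the perturbation until the kernel equals the span of the vanishing vectors. -/
private lemma exists_good_functional (α : Fin n → Fin r → ℝ)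
    (hspan : Submodule.span ℝ (Set.range α) = ⊤) (J : Finset (Fin n)) (ε : Fin r → ℝ)
    (hex : ∃ f : (Fin r → ℝ) →ₗ[ℝ] ℝ, (∀ i ∈ Jᶜ, f (α i) ≤ 0) ∧ 0 < f ε) :
    ∃ f : (Fin r → ℝ) →ₗ[ℝ] ℝ, (∀ i ∈ Jᶜ, f (α i) ≤ 0) ∧ 0 < f ε ∧
      LinearMap.ker f = Submodule.span ℝ (α '' {i | f (α i) = 0}) := by
  classical
  have key : ∀ k : ℕ, ∀ f : (Fin r → ℝ) →ₗ[ℝ] ℝ, (∀ i ∈ Jᶜ, f (α i) ≤ 0) → 0 < f ε →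
      r - 1 - Module.finrank ℝ (Submodule.span ℝ (α '' {i | f (α i) = 0})) ≤ k →
      ∃ f : (Fin r → ℝ) →ₗ[ℝ] ℝ, (∀ i ∈ Jᶜ, f (α i) ≤ 0) ∧ 0 < f ε ∧
        LinearMap.ker f = Submodule.span ℝ (α '' {i | f (α i) = 0}) := by
    intro k
    induction k with
    | zero =>
      intro f h1 h2 hk
      have hker : Submodule.span ℝ (α '' {i | f (α i) = 0}) ≤ LinearMap.ker f := by
        rw [Submodule.span_le]
        rintro _ ⟨i, hi, rfl⟩
        exact hi
      have hfk := finrank_ker_eq f (ne_of_gt h2)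
      have hd : Module.finrank ℝ (Submodule.span ℝ (α '' {i | f (α i) = 0})) ≤ r - 1 := by
        rw [← hfk]
        exact Submodule.finrank_mono hker
      refine ⟨f, h1, h2, ?_⟩
      exact (Submodule.eq_of_le_of_finrank_le hker (by omega)).symm
    | succ k ihk =>
      intro f h1 h2 hk
      by_cases hW : Submodule.span ℝ (α '' {i | f (α i) = 0}) ⊔ (Submodule.span ℝ {ε}) = ⊤
      · have hker : Submodule.span ℝ (α '' {i | f (α i) = 0}) ≤ LinearMap.ker f := by
          rw [Submodule.span_le]
          rintro _ ⟨i, hi, rfl⟩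
          exact hi
        have hfk := finrank_ker_eq f (ne_of_gt h2)
        have hεne : ε ≠ 0 := by
          intro h
          rw [h, map_zero] at h2
          exact lt_irrefl 0 h2
        have hd1 : Module.finrank ℝ
            ↥(Submodule.span ℝ (α '' {i | f (α i) = 0}) ⊔ (Submodule.span ℝ {ε})) ≤
            Module.finrank ℝ (Submodule.span ℝ (α '' {i | f (α i) = 0})) + 1 := by
          have := Submodule.finrank_add_le_finrank_add_finrank
            (Submodule.span ℝ (α '' {i | f (α i) = 0})) (Submodule.span ℝ {ε})
          rwa [finrank_span_singleton hεne] at this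
        rw [hW, finrank_top, Module.finrank_fin_fun] at hd1
        have hd : Module.finrank ℝ (Submodule.span ℝ (α '' {i | f (α i) = 0})) ≤ r - 1 := by
          rw [← hfk]
          exact Submodule.finrank_mono hker
        refine ⟨f, h1, h2, ?_⟩
        exact (Submodule.eq_of_le_of_finrank_le hker (by omega)).symm
      · obtain ⟨f', h1', h2', hlt⟩ := perturb_step α hspan J ε f h1 h2 hW
        apply ihk f' h1' h2'
        omega
  obtain ⟨f, h1, h2⟩ := hex
  exact key (r - 1 - Module.finrank ℝ (Submodule.span ℝ (α '' {i | f (α i) = 0}))) f h1 h2 le_rfl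

end JKAux

/-- **Geometric description of `I_{𝔄,ε}`.** The ideal `I_{𝔄,ε}` is generated by the
products `∏_{αᵢ ∈ H⁺} αᵢ`, where `H` ranges over the hyperplanes spanned by subsets of
`𝔄` and `H⁺` is the open half-space bounded by `H` containing `ε`. -/
theorem jkIdeal_eq_halfspace_ideal {r n : ℕ}
    (α : Fin n → Fin r → ℝ) (hα : ∀ i, α i ≠ 0) (hpol : Polarized α)
    (ε : Fin r → ℝ) (hreg : RegularWrt α ε) (hε : InCone α Finset.univ ε) :
    JKIdeal α ε = Ideal.span {g | ∃ f : (Fin r → ℝ) →ₗ[ℝ] ℝ,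
      IsHyperplaneOf α (LinearMap.ker f) ∧ 0 < f ε ∧
      g = ∏ i ∈ Finset.univ.filter (fun i => 0 < f (α i)), linPoly (α i)} := by
  classical
  have hspan : Submodule.span ℝ (Set.range α) = ⊤ := by
    by_contra hne
    have h1 := hreg Set.univ (by rwa [Set.image_univ])
    apply h1
    rw [Set.image_univ]
    obtain ⟨c, _, rfl⟩ := hε
    exact Submodule.sum_mem _ fun i _ =>
      Submodule.smul_mem _ _ (Submodule.subset_span ⟨i, rfl⟩)
  apply le_antisymm
  · rw [JKIdeal, Ideal.span_le]
    rintro g ⟨J, hJ, rfl⟩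
    obtain ⟨f, hf1, hf2, hf3⟩ :=
      exists_good_functional α hspan J ε (farkas_aux Jᶜ α ε hJ)
    set s : Finset (Fin n) := Finset.univ.filter fun i => 0 < f (α i) with hsdef
    have hsJ : s ⊆ J := by
      intro i hi
      simp only [hsdef, Finset.mem_filter] at hi
      by_contra hiJ
      exact absurd (hf1 i (Finset.mem_compl.2 hiJ)) (not_le.2 hi.2)
    have hprod : ∏ j ∈ J, linPoly (α j) =
        (∏ j ∈ J \ s, linPoly (α j)) * ∏ j ∈ s, linPoly (α j) :=
      (Finset.prod_sdiff hsJ).symm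
    rw [SetLike.mem_coe, hprod]
    refine Ideal.mul_mem_left _ _ (Ideal.subset_span ?_)
    refine ⟨f, ⟨⟨{i | f (α i) = 0}, hf3⟩, ?_⟩, hf2, rfl⟩
    exact finrank_ker_eq f (ne_of_gt hf2)
  · rw [Ideal.span_le]
    rintro g ⟨f, hH, hfε, rfl⟩
    apply Ideal.subset_span
    refine ⟨Finset.univ.filter fun i => 0 < f (α i), ?_, rfl⟩
    rintro ⟨c, hc, hsum⟩
    have hle : f ε ≤ 0 := by
      rw [hsum, map_sum]
      apply Finset.sum_nonpos
      intro i hi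
      rw [map_smul, smul_eq_mul]
      have hi' : ¬ 0 < f (α i) := by
        have := Finset.mem_compl.1 hi
        simpa using this
      exact mul_nonpos_of_nonneg_of_nonpos (hc i hi) (not_lt.1 hi')
    linarith
end
end

section
/- The case r = 2. Let α₁,…,αₙ be a polarized list of nonzero vectors in ℝ², let ε ∈ ℝ² be regular with respect to the list with ε ∈ Cone(α₁,…,αₙ), and let 1 ≤ k ≤ n−1. Suppose that α₁,…,α_k lie strictly on one side of the line ℝε and α_{k+1},…,αₙ lie strictly on the other side. Then I_{𝔄,ε} = ⟨α₁⋯α_k, α_{k+1}⋯αₙ⟩ as ideals of ℝ[x₁,x₂], where each αᵢ is regarded as a linear polynomial. -/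
open MvPolynomial

noncomputable section

/-- Auxiliary: a nonzero vector with `g ε = 0` cannot be a nonnegative combination of
vectors on which `g` is strictly positive. -/
lemma notInCone_of_pos {n : ℕ} (α : Fin n → Fin 2 → ℝ) (ε : Fin 2 → ℝ)
    (g : (Fin 2 → ℝ) →ₗ[ℝ] ℝ) (hgε : g ε = 0) (hεne : ε ≠ 0)
    (s : Finset (Fin n)) (hs : ∀ i ∈ s, 0 < g (α i)) : ¬ InCone α s ε := by
  rintro ⟨c, hc, heq⟩
  have hfε' : g ε = ∑ i ∈ s, c i * g (α i) := by
    rw [heq, map_sum]; simp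
  have hnn : ∀ i ∈ s, 0 ≤ c i * g (α i) := fun i hi => mul_nonneg (hc i hi) (hs i hi).le
  have hsum0 : ∑ i ∈ s, c i * g (α i) = 0 := by rw [← hfε', hgε]
  have hz : ∀ i ∈ s, c i * g (α i) = 0 :=
    (Finset.sum_eq_zero_iff_of_nonneg hnn).1 hsum0
  apply hεne
  rw [heq]
  apply Finset.sum_eq_zero
  intro i hi
  rcases mul_eq_zero.1 (hz i hi) with h | h
  · rw [h, zero_smul]
  · exact absurd h (ne_of_gt (hs i hi))

lemma dotp_sum {n : ℕ} (s : Finset (Fin n)) (c : Fin n → ℝ) (α : Fin n → Fin 2 → ℝ)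
    (ξ : Fin 2 → ℝ) :
    dotp (∑ i ∈ s, c i • α i) ξ = ∑ i ∈ s, c i * dotp (α i) ξ := by
  simp only [dotp, Finset.sum_apply, Pi.smul_apply, smul_eq_mul, Finset.sum_mul,
    Finset.mul_sum]
  rw [Finset.sum_comm]
  simp [mul_assoc]

/-- **The case `r = 2`.** If `α₁,…,α_k` lie strictly on one side of the line `ℝε` and
`α_{k+1},…,αₙ` strictly on the other side, then
`I_{𝔄,ε} = ⟨α₁⋯α_k, α_{k+1}⋯αₙ⟩`. -/
theorem jkIdeal_rank_two {n : ℕ} (α : Fin n → Fin 2 → ℝ)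
    (hα : ∀ i, α i ≠ 0) (hpol : Polarized α)
    (ε : Fin 2 → ℝ) (hreg : RegularWrt α ε) (hε : InCone α Finset.univ ε)
    (k : ℕ) (hk1 : 1 ≤ k) (hk2 : k ≤ n - 1)
    (f : (Fin 2 → ℝ) →ₗ[ℝ] ℝ)
    (hker : LinearMap.ker f = Submodule.span ℝ {ε})
    (hside1 : ∀ i : Fin n, (i : ℕ) < k → 0 < f (α i))
    (hside2 : ∀ i : Fin n, k ≤ (i : ℕ) → f (α i) < 0) :
    JKIdeal α ε = Ideal.span
      {∏ i ∈ Finset.univ.filter (fun i : Fin n => (i : ℕ) < k), linPoly (α i),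
       ∏ i ∈ Finset.univ.filter (fun i : Fin n => k ≤ (i : ℕ)), linPoly (α i)} := by
  obtain ⟨ξ, hξ⟩ := hpol
  -- ε ≠ 0
  have hεne : ε ≠ 0 := by
    intro h
    have hbot : Submodule.span ℝ (α '' (∅ : Set (Fin n))) ≠ ⊤ := by
      simp
    have := hreg ∅ hbot
    apply this
    simp [h]
  -- f ε = 0
  have hfε : f ε = 0 := by
    have : ε ∈ LinearMap.ker f := by
      rw [hker]; exact Submodule.mem_span_singleton_self ε
    exact this
  -- dotp ε ξ > 0
  have hεξ : 0 < dotp ε ξ := by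
    obtain ⟨c, hc, hεeq⟩ := hε
    rw [hεeq, dotp_sum]
    rcases lt_or_eq_of_le (Finset.sum_nonneg fun i _ =>
      mul_nonneg (hc i (Finset.mem_univ i)) (hξ i).le) with h | h
    · exact h
    · exfalso
      have hz : ∀ i ∈ Finset.univ, c i * dotp (α i) ξ = 0 :=
        (Finset.sum_eq_zero_iff_of_nonneg fun i _ =>
          mul_nonneg (hc i (Finset.mem_univ i)) (hξ i).le).1 h.symm
      apply hεne
      rw [hεeq]
      apply Finset.sum_eq_zero
      intro i hi
      rcases mul_eq_zero.1 (hz i hi) with h' | h'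
      · rw [h', zero_smul]
      · exact absurd h' (ne_of_gt (hξ i))
  -- key: any set containing indices on both sides has ε in its cone
  have key : ∀ (s : Finset (Fin n)) (i₀ j₀ : Fin n), i₀ ∈ s → j₀ ∈ s →
      (i₀ : ℕ) < k → k ≤ (j₀ : ℕ) → InCone α s ε := by
    intro s i₀ j₀ hi hj hik hjk
    have hne : i₀ ≠ j₀ := by
      intro h; rw [h] at hik; omega
    have ha : 0 < f (α i₀) := hside1 i₀ hik
    have hb : f (α j₀) < 0 := hside2 j₀ hjk
    set v : Fin 2 → ℝ := (-(f (α j₀))) • α i₀ + (f (α i₀)) • α j₀ with hv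
    have hfv : f v = 0 := by
      rw [hv]; simp; ring
    obtain ⟨t, ht⟩ : ∃ t : ℝ, v = t • ε := by
      have hmem : v ∈ Submodule.span ℝ {ε} := by
        rw [← hker]; exact hfv
      obtain ⟨t, ht⟩ := Submodule.mem_span_singleton.1 hmem
      exact ⟨t, ht.symm⟩
    have hvξ : 0 < dotp v ξ := by
      have : dotp v ξ = (-(f (α j₀))) * dotp (α i₀) ξ + (f (α i₀)) * dotp (α j₀) ξ := by
        simp [hv, dotp, Finset.sum_add_distrib, Finset.mul_sum, mul_add, add_mul, mul_assoc]
        ring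
      rw [this]
      have h1 : 0 < (-(f (α j₀))) * dotp (α i₀) ξ :=
        mul_pos (by linarith) (hξ i₀)
      have h2 : 0 < (f (α i₀)) * dotp (α j₀) ξ := mul_pos ha (hξ j₀)
      linarith
    have htξ : dotp v ξ = t * dotp ε ξ := by
      rw [ht]
      simp [dotp, Finset.mul_sum, mul_assoc]
      ring
    have ht0 : 0 < t := by
      by_contra h
      push_neg at h
      have : dotp v ξ ≤ 0 := by
        rw [htξ]
        exact mul_nonpos_of_nonpos_of_nonneg h hεξ.le
      linarith
    refine ⟨fun i => if i = i₀ then (-(f (α j₀))) / t else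
      if i = j₀ then (f (α i₀)) / t else 0, ?_, ?_⟩
    · intro i _
      dsimp only
      by_cases h1 : i = i₀
      · rw [if_pos h1]
        exact div_nonneg (by linarith) ht0.le
      · by_cases h2 : i = j₀
        · rw [if_neg h1, if_pos h2]
          exact div_nonneg (by linarith) ht0.le
        · simp [h1, h2]
    · have hsub : ({i₀, j₀} : Finset (Fin n)) ⊆ s := by
        intro x hx
        rcases Finset.mem_insert.1 hx with rfl | hx
        · exact hi
        · rw [Finset.mem_singleton.1 hx]; exact hj
      rw [← Finset.sum_subset hsub (by
        intro x _ hx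
        have h1 : x ≠ i₀ := fun h => hx (by rw [h]; exact Finset.mem_insert_self _ _)
        have h2 : x ≠ j₀ := fun h => hx (by rw [h]; simp)
        simp [h1, h2])]
      rw [Finset.sum_pair hne]
      simp only [if_pos rfl, if_neg hne.symm, if_neg hne]
      funext x
      have hvx := congrFun ht x
      simp only [hv, Pi.add_apply, Pi.smul_apply, smul_eq_mul, if_true] at hvx ⊢
      have htne : t ≠ 0 := ne_of_gt ht0
      rw [div_mul_eq_mul_div, div_mul_eq_mul_div, ← add_div, eq_div_iff htne]
      linarith [hvx]
  apply le_antisymm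
  · rw [JKIdeal, Ideal.span_le]
    rintro g ⟨J, hJ, rfl⟩
    by_cases h1 : ∀ i : Fin n, (i : ℕ) < k → i ∈ J
    · have hsub : Finset.univ.filter (fun i : Fin n => (i : ℕ) < k) ⊆ J := by
        intro i hi
        exact h1 i (Finset.mem_filter.1 hi).2
      rw [← Finset.prod_sdiff hsub]
      exact Ideal.mul_mem_left _ _ (Ideal.subset_span (Or.inl rfl))
    · by_cases h2 : ∀ i : Fin n, k ≤ (i : ℕ) → i ∈ J
      · have hsub : Finset.univ.filter (fun i : Fin n => k ≤ (i : ℕ)) ⊆ J := by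
          intro i hi
          exact h2 i (Finset.mem_filter.1 hi).2
        rw [← Finset.prod_sdiff hsub]
        exact Ideal.mul_mem_left _ _ (Ideal.subset_span (Or.inr rfl))
      · push_neg at h1 h2
        obtain ⟨i₀, hik, hiJ⟩ := h1
        obtain ⟨j₀, hjk, hjJ⟩ := h2
        exact absurd (key Jᶜ i₀ j₀ (Finset.mem_compl.2 hiJ)
          (Finset.mem_compl.2 hjJ) hik hjk) hJ
  · rw [Ideal.span_le]
    rintro g hg
    rcases hg with rfl | rfl
    · apply Ideal.subset_span
      refine ⟨Finset.univ.filter (fun i : Fin n => (i : ℕ) < k), ?_, rfl⟩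
      apply notInCone_of_pos α ε (-f) (by simp [hfε]) hεne
      intro i hi
      simp only [Finset.mem_compl, Finset.mem_filter, Finset.mem_univ, true_and,
        not_lt] at hi
      simpa using (hside2 i hi)
    · apply Ideal.subset_span
      refine ⟨Finset.univ.filter (fun i : Fin n => k ≤ (i : ℕ)), ?_, rfl⟩
      apply notInCone_of_pos α ε f hfε hεne
      intro i hi
      simp only [Finset.mem_compl, Finset.mem_filter, Finset.mem_univ, true_and,
        not_le] at hi
      exact hside1 i hi
end
end

section
/- Vanishing outside the cone. Let 𝔄 = [α₁,…,αₙ] be a polarized list of nonzero vectors in ℝʳ, let ε ∈ ℝʳ be regular with respect to 𝔄, and let λ be a Jeffrey–Kirwan functional for (𝔄, ε). If S ⊆ {1,…,n} satisfies ε ∉ Cone(αᵢ : i ∈ S), then λ(Q/∏_{i∈S} αᵢ) = 0 for every polynomial Q ∈ ℝ[x₁,…,x_r]. -/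
open MvPolynomial

noncomputable section

namespace JKAux
variable {r n : ℕ}

example : Algebra ℝ (Frac r) := inferInstance
example : IsScalarTower ℝ (MvPolynomial (Fin r) ℝ) (Frac r) := inferInstance

lemma emb_injective : Function.Injective (emb (r := r)) :=
  IsFractionRing.injective (MvPolynomial (Fin r) ℝ) (Frac r)

lemma linPoly_coeff (v : Fin r → ℝ) (k : Fin r) :
    (linPoly v).coeff (Finsupp.single k 1) = v k := by
  have h : ∀ x : Fin r, (Finsupp.single x 1 = Finsupp.single k (1:ℕ)) ↔ x = k :=
    fun x => Finsupp.single_left_inj one_ne_zero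
  simp [linPoly, MvPolynomial.coeff_sum, MvPolynomial.coeff_C_mul, MvPolynomial.coeff_X', h,
    Finset.sum_ite_eq]

lemma linPoly_ne_zero {v : Fin r → ℝ} (hv : v ≠ 0) : linPoly v ≠ 0 := by
  obtain ⟨k, hk⟩ := Function.ne_iff.mp hv
  intro h
  apply hk
  have := linPoly_coeff v k
  rw [h] at this
  simpa using this.symm

def linPolyL : (Fin r → ℝ) →ₗ[ℝ] MvPolynomial (Fin r) ℝ where
  toFun := linPoly
  map_add' v w := by simp [linPoly, map_add, add_mul, Finset.sum_add_distrib]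
  map_smul' a v := by
    simp [linPoly, smul_eq_C_mul, Finset.mul_sum, mul_assoc, map_mul]

lemma linPoly_single (k : Fin r) : linPoly (Pi.single k (1:ℝ)) = X k := by
  simp [linPoly, Pi.single_apply, apply_ite (C : ℝ → MvPolynomial (Fin r) ℝ), ite_mul,
    Finset.sum_ite_eq]

lemma emb_smul (a : ℝ) (P : MvPolynomial (Fin r) ℝ) : emb (a • P) = a • emb P := by
  rw [smul_eq_C_mul, Algebra.smul_def, IsScalarTower.algebraMap_apply ℝ (MvPolynomial (Fin r) ℝ) (Frac r)]
  simp [emb, map_mul, MvPolynomial.algebraMap_eq]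

variable {α : Fin n → Fin r → ℝ}

lemma fracOf_add (P Q : MvPolynomial (Fin r) ℝ) (m : Fin n → ℕ) :
    fracOf α (P + Q) m = fracOf α P m + fracOf α Q m := by
  simp [fracOf, emb, map_add, add_div]

lemma fracOf_smul (a : ℝ) (P : MvPolynomial (Fin r) ℝ) (m : Fin n → ℕ) :
    fracOf α (a • P) m = a • fracOf α P m := by
  rw [fracOf, fracOf, emb_smul, smul_div_assoc]

lemma fracOf_sum {ι : Type*} (s : Finset ι) (f : ι → MvPolynomial (Fin r) ℝ) (m : Fin n → ℕ) :
    fracOf α (∑ i ∈ s, f i) m = ∑ i ∈ s, fracOf α (f i) m := by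
  simp [fracOf, emb, map_sum, Finset.sum_div]

lemma emb_ne_zero {P : MvPolynomial (Fin r) ℝ} (h : P ≠ 0) : emb P ≠ 0 := by
  intro hc
  exact h (emb_injective (by rw [hc]; simp [emb, map_zero]))

lemma fracOf_cancel (hα : ∀ i, α i ≠ 0) {i : Fin n} {m : Fin n → ℕ} (hm : 0 < m i)
    (P : MvPolynomial (Fin r) ℝ) :
    fracOf α (P * linPoly (α i)) m = fracOf α P (Function.update m i (m i - 1)) := by
  classical
  have hE : emb (linPoly (α i)) ≠ 0 := emb_ne_zero (linPoly_ne_zero (hα i))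
  have h1 : ∀ j ∈ Finset.univ.erase i,
      emb (linPoly (α j)) ^ (Function.update m i (m i - 1) j) = emb (linPoly (α j)) ^ m j :=
    fun j hj => by rw [Function.update_of_ne (Finset.ne_of_mem_erase hj)]
  have hprod : (∏ j, emb (linPoly (α j)) ^ m j)
      = emb (linPoly (α i)) * ∏ j, emb (linPoly (α j)) ^ (Function.update m i (m i - 1) j) := by
    rw [← Finset.mul_prod_erase Finset.univ (fun j => emb (linPoly (α j)) ^ m j)
        (Finset.mem_univ i),
      ← Finset.mul_prod_erase Finset.univ
        (fun j => emb (linPoly (α j)) ^ (Function.update m i (m i - 1) j)) (Finset.mem_univ i),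
      Finset.prod_congr rfl h1, Function.update_self, ← mul_assoc, ← pow_succ']
    congr 2
    omega
  rw [fracOf, fracOf, hprod]
  have : emb (P * linPoly (α i)) = emb P * emb (linPoly (α i)) := by simp [emb, map_mul]
  rw [this, mul_comm (emb (linPoly (α i)))
    (∏ j, emb (linPoly (α j)) ^ (Function.update m i (m i - 1) j)),
    mul_div_mul_right _ _ hE]

lemma sum_update_sub_one {m : Fin n → ℕ} {i : Fin n} (hm : 0 < m i) :
    ∑ j, Function.update m i (m i - 1) j = (∑ j, m j) - 1 := by
  classical
  rw [Finset.sum_update_of_mem (Finset.mem_univ i)]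
  have h2 : m i + ∑ j ∈ Finset.univ.erase i, m j = ∑ j, m j :=
    Finset.add_sum_erase Finset.univ m (Finset.mem_univ i)
  have h3 : Finset.univ \ {i} = Finset.univ.erase i := by
    simp [Finset.erase_eq]
  rw [h3]
  omega

lemma InCone.mono' {σ S : Finset (Fin n)} {ε : Fin r → ℝ} (h : σ ⊆ S) :
    InCone α σ ε → InCone α S ε := by
  classical
  rintro ⟨c, hc0, rfl⟩
  refine ⟨fun i => if i ∈ σ then c i else 0, fun i _ => ?_, ?_⟩
  · dsimp only
    split
    · exact hc0 _ ‹_›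
    · exact le_refl 0
  · calc ∑ i ∈ σ, c i • α i
        = ∑ i ∈ σ, (if i ∈ σ then c i else 0) • α i :=
          Finset.sum_congr rfl (fun x hx => by simp [hx])
      _ = ∑ i ∈ S, (if i ∈ σ then c i else 0) • α i :=
          Finset.sum_subset h (fun x _ hx => by simp [hx])


lemma key (hα : ∀ i, α i ≠ 0) (ε : Fin r → ℝ)
    (lam : Frac r →ₗ[ℝ] ℝ) (hlam : IsJKFunctional α ε lam)
    (S : Finset (Fin n)) (hS : ¬ InCone α S ε) :
    ∀ N : ℕ, ∀ m : Fin n → ℕ, (∑ i, m i) ≤ N → (∀ i, 0 < m i → i ∈ S) →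
      ∀ Q, lam (fracOf α Q m) = 0 := by
  classical
  intro N
  induction N using Nat.strong_induction_on with
  | _ N IH =>
  intro m hmN hmS Q
  by_cases hgen : Generating α {i | 0 < m i}
  · -- generating support
    set T : Finset (Fin n) := Finset.univ.filter (fun i => 0 < m i) with hT
    have hTset : (↑T : Set (Fin n)) = {i | 0 < m i} := by
      ext x; simp [hT]
    have hspan : Submodule.span ℝ (α '' (↑T : Set (Fin n))) = ⊤ := by
      rw [hTset]; exact hgen
    induction Q using MvPolynomial.induction_on with
    | C a =>
      have ha : (C a : MvPolynomial (Fin r) ℝ) = a • (1 : MvPolynomial (Fin r) ℝ) := by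
        simp [smul_eq_C_mul]
      rw [ha, fracOf_smul, map_smul, smul_eq_mul]
      by_cases hsum : (∑ i, m i) = r
      · -- must be a Φ_T with T a basis
        have hr : Module.finrank ℝ (Fin r → ℝ) = r := by
          rw [Module.finrank_pi, Fintype.card_fin]
        have hcard1 : r ≤ T.card := by
          have h1 : Submodule.span ℝ (↑(T.image α) : Set (Fin r → ℝ)) = ⊤ := by
            rw [Finset.coe_image]; exact hspan
          have h2 := finrank_span_finset_le_card (R := ℝ) (T.image α)
          rw [Set.finrank, h1, finrank_top, hr] at h2
          exact h2.trans Finset.card_image_le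
        have hsumT : ∑ i ∈ T, m i = r := by
          rw [← hsum]
          symm
          apply (Finset.sum_subset (Finset.subset_univ T) _).symm
          intro x _ hx
          have : ¬ 0 < m x := by simpa [hT] using hx
          omega
        have hone : ∀ i ∈ T, 1 ≤ m i := by
          intro i hi
          have : 0 < m i := by simpa [hT] using hi
          omega
        have hcard2 : T.card ≤ r := by
          calc T.card = ∑ _i ∈ T, 1 := by simp
            _ ≤ ∑ i ∈ T, m i := Finset.sum_le_sum hone
            _ = r := hsumT
        have hcard : T.card = r := le_antisymm hcard2 hcard1
        have hm1 : ∀ i ∈ T, m i = 1 := by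
          by_contra hcon
          push_neg at hcon
          obtain ⟨i, hi, hne⟩ := hcon
          have hlt : ∑ _i ∈ T, 1 < ∑ i ∈ T, m i :=
            Finset.sum_lt_sum hone ⟨i, hi, by have := hone i hi; omega⟩
          rw [hsumT, Finset.sum_const, smul_eq_mul, mul_one, hcard] at hlt
          exact lt_irrefl r hlt
        have hmdef : m = fun i => if i ∈ T then 1 else 0 := by
          funext i
          by_cases hi : i ∈ T
          · simp [hi, hm1 i hi]
          · have : ¬ 0 < m i := by simpa [hT] using hi
            simp only [hi, if_false]
            omega
        have hphi : fracOf α 1 m = Phi α T := by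
          rw [fracOf, Phi, hmdef]
          have : emb (1 : MvPolynomial (Fin r) ℝ) = 1 := by simp [emb, map_one]
          rw [this, one_div]
          congr 1
          calc ∏ j, emb (linPoly (α j)) ^ (if j ∈ T then 1 else 0)
              = ∏ j, (if j ∈ T then emb (linPoly (α j)) else 1) :=
                Finset.prod_congr rfl (fun j _ => by split <;> simp)
            _ = ∏ j ∈ Finset.univ ∩ T, emb (linPoly (α j)) := Finset.prod_ite_mem _ _ _
            _ = ∏ j ∈ T, emb (linPoly (α j)) := by rw [Finset.univ_inter]
        have hbasis : IsConeBasis α T := by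
          constructor
          · apply linearIndependent_of_top_le_span_of_card_eq_finrank
            · have hrange : Set.range (fun j : {x // x ∈ T} => α ↑j) = α '' (↑T : Set (Fin n)) := by
                ext v
                constructor
                · rintro ⟨⟨j, hj⟩, rfl⟩
                  exact ⟨j, by simpa using hj, rfl⟩
                · rintro ⟨j, hj, rfl⟩
                  exact ⟨⟨j, by simpa using hj⟩, rfl⟩
              rw [hrange, hspan]
            · simp [hr, hcard]
          · exact hspan
        have hTS : T ⊆ S := fun i hi => hmS i (by simpa [hT] using hi)
        have hnc : ¬ InCone α T ε := fun h => hS (InCone.mono' hTS h)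
        rw [hphi, (hlam.2.2 T hbasis).2 hnc, mul_zero]
      · rw [hlam.2.1 m hgen hsum, mul_zero]
    | add p q hp hq => rw [fracOf_add, map_add, hp, hq, add_zero]
    | mul_X p k _ =>
      have hmem : Pi.single k (1:ℝ) ∈ Submodule.span ℝ (α '' (↑T : Set (Fin n))) := by
        rw [hspan]; trivial
      obtain ⟨l, hl, hlk⟩ := (Finsupp.mem_span_image_iff_linearCombination ℝ).mp hmem
      have hsub : l.support ⊆ T := by
        intro x hx
        exact_mod_cast (Finsupp.mem_supported ℝ l).mp hl hx
      have h1 : Pi.single k (1:ℝ) = ∑ i ∈ T, l i • α i := by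
        rw [← hlk, Finsupp.linearCombination_apply, Finsupp.sum]
        apply Finset.sum_subset hsub
        intro x _ hx
        simp [Finsupp.notMem_support_iff.mp hx]
      have hXk : (X k : MvPolynomial (Fin r) ℝ) = ∑ i ∈ T, l i • linPoly (α i) := by
        calc (X k : MvPolynomial (Fin r) ℝ) = linPolyL (Pi.single k 1) :=
              (linPoly_single k).symm
          _ = linPolyL (∑ i ∈ T, l i • α i) := by rw [← h1]
          _ = ∑ i ∈ T, l i • linPoly (α i) := by
              rw [map_sum]
              exact Finset.sum_congr rfl (fun i _ => by rw [map_smul]; rfl)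
      have hsplit : fracOf α (p * X k) m = ∑ i ∈ T, l i • fracOf α (p * linPoly (α i)) m := by
        rw [hXk, Finset.mul_sum]
        have : ∀ i, p * (l i • linPoly (α i)) = l i • (p * linPoly (α i)) := fun i =>
          mul_smul_comm _ _ _
        simp_rw [this]
        rw [fracOf_sum]
        exact Finset.sum_congr rfl (fun i _ => fracOf_smul _ _ _)
      rw [hsplit, map_sum]
      apply Finset.sum_eq_zero
      intro i hi
      have hmi : 0 < m i := by simpa [hT] using hi
      rw [map_smul, fracOf_cancel hα hmi, smul_eq_mul]
      have hsum' : ∑ j, Function.update m i (m i - 1) j = (∑ j, m j) - 1 :=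
        sum_update_sub_one hmi
      have hge : m i ≤ ∑ j, m j :=
        Finset.single_le_sum (fun j _ => Nat.zero_le _) (Finset.mem_univ i)
      have hsupp : ∀ j, 0 < Function.update m i (m i - 1) j → j ∈ S := by
        intro j hj
        by_cases h : j = i
        · subst h; exact hmS j hmi
        · rw [Function.update_of_ne h] at hj
          exact hmS j hj
      rw [IH _ (by omega) _ le_rfl hsupp p, mul_zero]
  · exact hlam.1 _ (Submodule.subset_span ⟨Q, m, hgen, rfl⟩)

end JKAux

/-- **Vanishing outside the cone.** If `ε ∉ Cone(αᵢ : i ∈ S)`, then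
`λ(Q/∏_{i∈S} αᵢ) = 0` for every polynomial `Q`. -/
theorem jk_vanishes_outside_cone {r n : ℕ} (α : Fin n → Fin r → ℝ)
    (hα : ∀ i, α i ≠ 0) (hpol : Polarized α)
    (ε : Fin r → ℝ) (hreg : RegularWrt α ε)
    (lam : Frac r →ₗ[ℝ] ℝ) (hlam : IsJKFunctional α ε lam)
    (S : Finset (Fin n)) (hS : ¬ InCone α S ε)
    (Q : MvPolynomial (Fin r) ℝ) :
    lam (emb Q / ∏ i ∈ S, emb (linPoly (α i))) = 0 := by
  classical
  have hmain := JKAux.key hα ε lam hlam S hS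
    (∑ i, (if i ∈ S then 1 else 0)) (fun i => if i ∈ S then 1 else 0) le_rfl
    (fun i hi => by by_contra h; simp [h] at hi) Q
  have heq : fracOf α Q (fun i => if i ∈ S then 1 else 0)
      = emb Q / ∏ i ∈ S, emb (linPoly (α i)) := by
    rw [fracOf]
    congr 1
    calc ∏ j, emb (linPoly (α j)) ^ (if j ∈ S then 1 else 0)
        = ∏ j, (if j ∈ S then emb (linPoly (α j)) else 1) :=
          Finset.prod_congr rfl (fun j _ => by split <;> simp)
      _ = ∏ j ∈ Finset.univ ∩ S, emb (linPoly (α j)) := Finset.prod_ite_mem _ _ _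
      _ = ∏ j ∈ S, emb (linPoly (α j)) := by rw [Finset.univ_inter]
  rw [← heq]
  exact hmain
end
end
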